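/- arXiv:1701.02459 — 3 statements merged into one kernel-verified Lean document; each statement's English description precedes it below -/
import Mathlib

section
/- Let n ≥ 1 and let I_n + A ∈ GL_n(R_n) be a matrix satisfying (I_n + A)·σ⃗ = σ⃗. Then det(I_n + A) = ∏_{r=1}^n x_r^{s_r} for some integers s_1,…,s_n. -/
noncomputable section

open Matrix

/-- The Laurent polynomial ring `ℤ[x₁^{±1},…,x_n^{±1}]`, realized as the group
algebra of the free abelian group `ℤⁿ` over `ℤ`. -/
abbrev LaurentR (n : ℕ) : Type := AddMonoidAlgebra ℤ (Fin n →₀ ℤ)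

/-- `x_i` as a unit of `LaurentR n`. -/
def Xu {n : ℕ} (i : Fin n) : (LaurentR n)ˣ where
  val := AddMonoidAlgebra.single (Finsupp.single i 1) 1
  inv := AddMonoidAlgebra.single (-Finsupp.single i 1) 1
  val_inv := by
    rw [AddMonoidAlgebra.single_mul_single]
    simp [AddMonoidAlgebra.one_def]
  inv_val := by
    rw [AddMonoidAlgebra.single_mul_single]
    simp [AddMonoidAlgebra.one_def]

/-- `x_i` as an element of `LaurentR n`. -/
def Xv {n : ℕ} (i : Fin n) : LaurentR n := (Xu i : LaurentR n)

/-- `σ_i = x_i - 1`. -/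
def sg {n : ℕ} (i : Fin n) : LaurentR n := Xv i - 1

/-- The vector `σ⃗`. -/
def sgVec (n : ℕ) : Fin n → LaurentR n := fun i => sg i

/-- `μ_{r,m} = 1 + x_r + ⋯ + x_r^{m-1}`. -/
def muv {n : ℕ} (r : Fin n) (m : ℕ) : LaurentR n := ∑ i ∈ Finset.range m, Xv r ^ i

/-- The augmentation ideal `𝔄_n = Σ σ_i R_n`. -/
def augI (n : ℕ) : Ideal (LaurentR n) := Ideal.span (Set.range (sgVec n))

/-- The ideal `m·R_n`. -/
def OI (n m : ℕ) : Ideal (LaurentR n) := Ideal.span {(m : LaurentR n)}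

/-- The ideal `H_{n,m} = Σ_r (x_r^m − 1)R_n + mR_n`. -/
def HI (n m : ℕ) : Ideal (LaurentR n) :=
  Ideal.span (Set.range (fun r : Fin n => Xv r ^ m - 1) ∪ {(m : LaurentR n)})

/-- `IA_n = {A ∈ GL_n(R_n) : A·σ⃗ = σ⃗}` as a subgroup of `GL_n(R_n)`. -/
def IAn (n : ℕ) : Subgroup (GL (Fin n) (LaurentR n)) where
  carrier := {g | (g : Matrix (Fin n) (Fin n) (LaurentR n)) *ᵥ sgVec n = sgVec n}
  one_mem' := by simp
  mul_mem' := by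
    intro a b ha hb
    simp only [Set.mem_setOf_eq, Units.val_mul] at *
    rw [← Matrix.mulVec_mulVec, hb, ha]
  inv_mem' := by
    intro a ha
    simp only [Set.mem_setOf_eq] at *
    have h : ((a⁻¹ : GL (Fin n) (LaurentR n)) : Matrix (Fin n) (Fin n) (LaurentR n)) *ᵥ
        ((a : Matrix (Fin n) (Fin n) (LaurentR n)) *ᵥ sgVec n) = sgVec n := by
      rw [Matrix.mulVec_mulVec, ← Units.val_mul, inv_mul_cancel, Units.val_one,
        Matrix.one_mulVec]
    rw [ha] at h
    exact h

/-- The underlying matrix of an element of `IA_n`. -/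
def matOf {n : ℕ} (g : IAn n) : Matrix (Fin n) (Fin n) (LaurentR n) :=
  ((g : GL (Fin n) (LaurentR n)) : Matrix (Fin n) (Fin n) (LaurentR n))

/-- The principal congruence subgroup `IG_{n,m}` (as a subset of `IA_n`). -/
def IGnm (n m : ℕ) : Set (IAn n) := {g | ∀ k l, (matOf g - 1) k l ∈ HI n m}

/-- `IA_n^m`: the subgroup of `IA_n` generated by all `m`-th powers. -/
def IApow (n m : ℕ) : Subgroup (IAn n) := Subgroup.closure (Set.range fun g : IAn n => g ^ m)


/-- `ISL_{n−1,i}(H)` for `n = k+1`: elements `I + A` of `IA_n` whose `i`-th row of `A`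
vanishes, all entries of the minor `A_{i,i}` lie in `σ_iR_n ∩ H`, and
`det(I_{n−1} + A_{i,i}) = 1`. -/
def ISL {k : ℕ} (i : Fin (k + 1)) (H : Ideal (LaurentR (k + 1))) : Set (IAn (k + 1)) :=
  {g | (∀ l, (matOf g - 1) i l = 0) ∧
    (∀ a b : Fin k, (matOf g - 1) (i.succAbove a) (i.succAbove b) ∈
      Ideal.span {sg i} ⊓ H) ∧
    ((matOf g).submatrix i.succAbove i.succAbove).det = 1}

/-- `IGL_{n−1,i}` for `n = k+1`: elements `I + A` of `IA_n` whose `i`-th row of `A`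
vanishes and all entries of the minor `A_{i,i}` lie in `σ_iR_n`. -/
def IGLset {k : ℕ} (i : Fin (k + 1)) : Set (IAn (k + 1)) :=
  {g | (∀ l, (matOf g - 1) i l = 0) ∧
    ∀ a b : Fin k, (matOf g - 1) (i.succAbove a) (i.succAbove b) ∈ Ideal.span {sg i}}

/-- The elementary matrix `I_d + r·E_{a,b}` (`a ≠ b`) as an element of `GL_d(A)`. -/
def elemGL {d : ℕ} {A : Type*} [CommRing A] (a b : Fin d) (hab : a ≠ b) (r : A) :
    GL (Fin d) A where
  val := 1 + Matrix.single a b r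
  inv := 1 - Matrix.single a b r
  val_inv := by
    have h2 : Matrix.single a b r * Matrix.single a b r = 0 :=
      Matrix.single_mul_single_of_ne (h := hab.symm) ..
    rw [mul_sub, mul_one, add_mul, one_mul, h2]
    abel
  inv_val := by
    have h2 : Matrix.single a b r * Matrix.single a b r = 0 :=
      Matrix.single_mul_single_of_ne (h := hab.symm) ..
    rw [sub_mul, one_mul, mul_add, mul_one, h2]
    abel

/-- `E_d(A)`: the subgroup generated by the elementary matrices. -/
def Egrp (d : ℕ) (A : Type*) [CommRing A] : Subgroup (GL (Fin d) A) :=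
  Subgroup.closure {g | ∃ (a b : Fin d) (hab : a ≠ b) (r : A), g = elemGL a b hab r}

/-- `E_d(A,H)`: the normal closure in `E_d(A)` of the elementary matrices with
parameter in the ideal `H`. -/
def EgrpRel (d : ℕ) (A : Type*) [CommRing A] (H : Ideal A) : Subgroup (GL (Fin d) A) :=
  Subgroup.closure {g | ∃ e ∈ Egrp d A, ∃ (a b : Fin d) (hab : a ≠ b), ∃ r ∈ H,
    g = e * elemGL a b hab r * e⁻¹}

/-- The generic column ideal used in the definitions of `J_{m,u,v}` and `J̃_{m,u,v}`
(with 1-indexed `u ∈ {0,…,n}` and `v` a 0-indexed column, so "`v ≤ u`" reads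
`v.val < u`).  `lead` is the leading factor (`𝔄̃_u` resp. `𝔄_n`). -/
def colIdeal (n m u : ℕ) (lead : Ideal (LaurentR n)) (v : Fin n) : Ideal (LaurentR n) :=
  lead * ((∑ r : Fin n, if r.val < u then augI n * Ideal.span {sg r * muv r m} else 0)
      + augI n * OI n m + OI n m ^ 2)
    + (if v.val < u then
        ∑ r : Fin n, if u ≤ r.val then Ideal.span {sg r ^ 3 * muv r m} else 0
      else
        (∑ r : Fin n, if u ≤ r.val ∧ r ≠ v then Ideal.span {sg r ^ 3 * muv r m} else 0)
          + augI n * Ideal.span {sg v ^ 2 * muv v m})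

/-- `𝔄̃_u = Σ_{r=u+1}^n σ_rR_n` (1-indexed `u`). -/
def augTil (n u : ℕ) : Ideal (LaurentR n) :=
  Ideal.span {x | ∃ r : Fin n, u ≤ r.val ∧ x = sg r}

/-- The ideal `J̃_{m,u,v}`. -/
def Jtil (n m u : ℕ) (v : Fin n) : Ideal (LaurentR n) := colIdeal n m u (augTil n u) v

/-- The ideal `J_{m,u,v}`. -/
def Jfull (n m u : ℕ) (v : Fin n) : Ideal (LaurentR n) := colIdeal n m u (augI n) v

/-- The determinant condition `det = ∏_r x_r^{s_r·m²}`. -/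
def detMon (n m : ℕ) (g : IAn n) : Prop :=
  ∃ s : Fin n → ℤ,
    (matOf g).det = ∏ r : Fin n, ((Xu r ^ (s r * (m : ℤ) ^ 2) : (LaurentR n)ˣ) : LaurentR n)

/-- The set `𝕁̃_{m,u}`. -/
def JmatTil (n m u : ℕ) : Set (IAn n) :=
  {g | (∀ k v, (matOf g - 1) k v ∈ Jtil n m u v) ∧ detMon n m g}

/-- The set `𝕁_{m,u}`. -/
def JmatFull (n m u : ℕ) : Set (IAn n) :=
  {g | (∀ k v, (matOf g - 1) k v ∈ Jfull n m u v) ∧ detMon n m g}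

/-- The ideal `J_m = Σ_r σ_r³μ_{r,m}R_n + 𝔄_n²·mR_n + 𝔄_n·m²R_n`. -/
def JmI (n m : ℕ) : Ideal (LaurentR n) :=
  Ideal.span (Set.range fun r : Fin n => sg r ^ 3 * muv r m)
    + augI n ^ 2 * OI n m + augI n * OI n (m ^ 2)

/-- The free metabelian group `Φ_n = F_n/F_n''`. -/
instance derivedSeries_normal' (G : Type*) [Group G] (n : ℕ) : (derivedSeries G n).Normal :=
  derivedSeries_normal _ _

def Phi (n : ℕ) : Type := FreeGroup (Fin n) ⧸ derivedSeries (FreeGroup (Fin n)) 2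

instance (n : ℕ) : Group (Phi n) :=
  inferInstanceAs (Group (FreeGroup (Fin n) ⧸ derivedSeries (FreeGroup (Fin n)) 2))


namespace Stmt1Aux

theorem mul_apply_top {A : Type*} [AddCommGroup A] [LinearOrder A] [IsOrderedAddMonoid A] (f g : AddMonoidAlgebra ℤ A)
    (af ag : A) (hf : ∀ a ∈ f.coeff.support, a ≤ af) (hg : ∀ a ∈ g.coeff.support, a ≤ ag) :
    (f * g).coeff (af + ag) = f.coeff af * g.coeff ag := by
  classical
  rw [AddMonoidAlgebra.coeff_mul, Finsupp.sum, Finset.sum_eq_single af]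
  · rw [Finsupp.sum, Finset.sum_eq_single ag]
    · simp
    · intro b hb hne
      exact if_neg fun he => hne (by exact add_left_cancel he)
    · intro h; rw [if_pos rfl, Finsupp.notMem_support_iff.1 h, mul_zero]
  · intro b hb hne
    refine Finset.sum_eq_zero fun c hc => if_neg fun he => ?_
    have h1 : b < af := lt_of_le_of_ne (hf b hb) hne
    have h2 : c ≤ ag := hg c hc
    exact absurd he (by exact ne_of_lt (add_lt_add_of_lt_of_le h1 h2))
  · intro h
    refine Finset.sum_eq_zero fun c hc => ?_
    simp only [Finsupp.notMem_support_iff.1 h, zero_mul, ite_self]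

theorem mul_apply_bot {A : Type*} [AddCommGroup A] [LinearOrder A] [IsOrderedAddMonoid A] (f g : AddMonoidAlgebra ℤ A)
    (bf bg : A) (hf : ∀ a ∈ f.coeff.support, bf ≤ a) (hg : ∀ a ∈ g.coeff.support, bg ≤ a) :
    (f * g).coeff (bf + bg) = f.coeff bf * g.coeff bg :=
  mul_apply_top (A := Aᵒᵈ) f g bf bg hf hg

theorem unit_single {A : Type*} [AddCommGroup A] [LinearOrder A] [IsOrderedAddMonoid A] {f g : AddMonoidAlgebra ℤ A}
    (h : f * g = 1) : ∃ (a : A) (c : ℤ), (c = 1 ∨ c = -1) ∧ f = AddMonoidAlgebra.single a c := by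
  classical
  have hf : f ≠ 0 := by rintro rfl; simp at h
  have hg : g ≠ 0 := by rintro rfl; simp at h
  have hfs : f.coeff.support.Nonempty :=
    Finsupp.support_nonempty_iff.2 (fun h0 => hf (AddMonoidAlgebra.coeff_eq_zero.1 h0))
  have hgs : g.coeff.support.Nonempty :=
    Finsupp.support_nonempty_iff.2 (fun h0 => hg (AddMonoidAlgebra.coeff_eq_zero.1 h0))
  set af := f.coeff.support.max' hfs with haf
  set ag := g.coeff.support.max' hgs with hag
  set bf := f.coeff.support.min' hfs with hbf
  set bg := g.coeff.support.min' hgs with hbg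
  have h1 : (f * g).coeff (af + ag) = f.coeff af * g.coeff ag :=
    mul_apply_top f g af ag (fun a ha => Finset.le_max' _ a ha) (fun a ha => Finset.le_max' _ a ha)
  have h2 : (f * g).coeff (bf + bg) = f.coeff bf * g.coeff bg :=
    mul_apply_bot f g bf bg (fun a ha => Finset.min'_le _ a ha) (fun a ha => Finset.min'_le _ a ha)
  have one_def : (1 : AddMonoidAlgebra ℤ A) = AddMonoidAlgebra.single 0 1 := rfl
  have h1ne : f.coeff af * g.coeff ag ≠ 0 :=
    mul_ne_zero (Finsupp.mem_support_iff.1 (f.coeff.support.max'_mem hfs))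
      (Finsupp.mem_support_iff.1 (g.coeff.support.max'_mem hgs))
  have h2ne : f.coeff bf * g.coeff bg ≠ 0 :=
    mul_ne_zero (Finsupp.mem_support_iff.1 (f.coeff.support.min'_mem hfs))
      (Finsupp.mem_support_iff.1 (g.coeff.support.min'_mem hgs))
  have e1 : af + ag = 0 := by
    by_contra hne
    rw [h, one_def, AddMonoidAlgebra.coeff_single, Finsupp.single_apply,
      if_neg (fun he => hne he.symm)] at h1
    exact h1ne h1.symm
  have e2 : bf + bg = 0 := by
    by_contra hne
    rw [h, one_def, AddMonoidAlgebra.coeff_single, Finsupp.single_apply,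
      if_neg (fun he => hne he.symm)] at h2
    exact h2ne h2.symm
  have hle1 : bf ≤ af := Finset.min'_le _ _ (f.coeff.support.max'_mem hfs)
  have hle2 : bg ≤ ag := Finset.min'_le _ _ (g.coeff.support.max'_mem hgs)
  have : bf = af := by
    by_contra hne
    have : bf + bg < af + ag := add_lt_add_of_lt_of_le (lt_of_le_of_ne hle1 hne) hle2
    rw [e1, e2] at this; exact lt_irrefl _ this
  have hsupp : f.coeff.support ⊆ {af} := by
    intro a ha
    exact Finset.mem_singleton.2
      (le_antisymm (Finset.le_max' _ a ha) (this ▸ Finset.min'_le _ a ha))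
  have hfe : f = AddMonoidAlgebra.single af (f.coeff af) := by
    have := congrArg AddMonoidAlgebra.ofCoeff (Finsupp.support_subset_singleton.1 hsupp)
    exact this
  have hone : f.coeff af * g.coeff ag = 1 := by
    rw [← h1, e1, h, one_def, AddMonoidAlgebra.coeff_single, Finsupp.single_eq_same]
  exact ⟨af, f.coeff af, Int.isUnit_iff.1 (IsUnit.of_mul_eq_one _ hone), hfe⟩

variable {n : ℕ}

/-- The monomials `x^a` as units, as a monoid hom. -/
def unitHom (n : ℕ) : Multiplicative (Fin n →₀ ℤ) →* (LaurentR n)ˣ where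
  toFun a :=
    { val := AddMonoidAlgebra.single (Multiplicative.toAdd a) 1
      inv := AddMonoidAlgebra.single (-(Multiplicative.toAdd a)) 1
      val_inv := by
        rw [AddMonoidAlgebra.single_mul_single]
        simp [AddMonoidAlgebra.one_def]
      inv_val := by
        rw [AddMonoidAlgebra.single_mul_single]
        simp [AddMonoidAlgebra.one_def] }
  map_one' := by
    apply Units.ext
    simp [AddMonoidAlgebra.one_def]
  map_mul' a b := by
    apply Units.ext
    show AddMonoidAlgebra.single _ 1 = AddMonoidAlgebra.single _ 1 * AddMonoidAlgebra.single _ 1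
    rw [AddMonoidAlgebra.single_mul_single, mul_one]
    rfl

theorem Xu_eq (r : Fin n) : Xu r = unitHom n (Multiplicative.ofAdd (Finsupp.single r 1)) :=
  Units.ext rfl

theorem Xu_zpow (r : Fin n) (k : ℤ) :
    Xu r ^ k = unitHom n (Multiplicative.ofAdd (Finsupp.single r k)) := by
  rw [Xu_eq, ← map_zpow, ← ofAdd_zsmul]
  congr 2
  rw [Finsupp.smul_single, smul_eq_mul, mul_one]

theorem sum_single_eq (a : Fin n →₀ ℤ) : ∑ r : Fin n, Finsupp.single r (a r) = a := by
  ext j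
  rw [Finset.sum_apply']
  simp [Finsupp.single_apply]

theorem prod_Xu_zpow (a : Fin n →₀ ℤ) :
    ∏ r : Fin n, Xu r ^ (a r) = unitHom n (Multiplicative.ofAdd a) := by
  simp_rw [Xu_zpow]
  rw [← map_prod, ← ofAdd_sum, sum_single_eq]

/-- The augmentation `ℤ[ℤⁿ] → ℤ`. -/
def aug (n : ℕ) : LaurentR n →ₐ[ℤ] ℤ :=
  AddMonoidAlgebra.lift ℤ ℤ (Fin n →₀ ℤ) 1

@[simp] theorem aug_single (a : Fin n →₀ ℤ) (b : ℤ) :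
    aug n (AddMonoidAlgebra.single a b) = b := by
  simp [aug, AddMonoidAlgebra.lift_single]

open DualNumber TrivSqZeroExt in
/-- The hom to dual numbers `x_i ↦ 1 + δ_{ij}ε`, as a monoid hom on monomials. -/
def psi (n : ℕ) (j : Fin n) : Multiplicative (Fin n →₀ ℤ) →* DualNumber ℤ where
  toFun a := 1 + ((Multiplicative.toAdd a j : ℤ) : DualNumber ℤ) * ε
  map_one' := by simp
  map_mul' a b := by
    have h : (ε ^ 2 : DualNumber ℤ) = 0 := by rw [sq]; exact eps_mul_eps
    push_cast
    ring_nf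
    rw [h]
    simp only [toAdd_mul, Finsupp.add_apply]
    push_cast
    ring

open DualNumber in
def PhiJ (n : ℕ) (j : Fin n) : LaurentR n →ₐ[ℤ] DualNumber ℤ :=
  AddMonoidAlgebra.lift ℤ (DualNumber ℤ) (Fin n →₀ ℤ) (psi n j)

open DualNumber in
theorem PhiJ_sg (j i : Fin n) :
    PhiJ n j (sg i) = ((if i = j then 1 else 0 : ℤ) : DualNumber ℤ) * ε := by
  have h1 : PhiJ n j (Xv i) = psi n j (Multiplicative.ofAdd (Finsupp.single i 1)) := by
    show PhiJ n j (AddMonoidAlgebra.single (Finsupp.single i (1:ℤ)) (1:ℤ)) = _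
    rw [PhiJ, AddMonoidAlgebra.lift_single, one_smul]
  rw [sg, map_sub, _root_.map_one, h1]
  show 1 + ((Finsupp.single i 1 j : ℤ) : DualNumber ℤ) * ε - 1 = _
  rw [Finsupp.single_apply, add_sub_cancel_left]

theorem fst_PhiJ (j : Fin n) (x : LaurentR n) :
    TrivSqZeroExt.fst (PhiJ n j x) = aug n x := by
  induction x using AddMonoidAlgebra.induction_linear with
  | zero => simp
  | add f g hf hg => rw [map_add, map_add, TrivSqZeroExt.fst_add, hf, hg]
  | single a b =>
    have h1 : PhiJ n j (AddMonoidAlgebra.single a b) = b • psi n j (Multiplicative.ofAdd a) :=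
      AddMonoidAlgebra.lift_single _ _ _
    rw [h1, aug_single, TrivSqZeroExt.fst_smul]
    show b • TrivSqZeroExt.fst
      (1 + ((a j : ℤ) : DualNumber ℤ) * DualNumber.eps) = b
    simp

end Stmt1Aux

/-- For `I + A ∈ GL_n(R_n)` with `(I+A)·σ⃗ = σ⃗`,
`det(I+A) = ∏_r x_r^{s_r}` for some integers `s_r`. -/
theorem statement_1 (n : ℕ) (hn : 1 ≤ n) (g : GL (Fin n) (LaurentR n)) (hg : g ∈ IAn n) :
    ∃ s : Fin n → ℤ, (g : Matrix (Fin n) (Fin n) (LaurentR n)).det =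
      ∏ r : Fin n, ((Xu r ^ s r : (LaurentR n)ˣ) : LaurentR n) := by
  classical
  open Stmt1Aux DualNumber in
  have hg' : (g : Matrix (Fin n) (Fin n) (LaurentR n)) *ᵥ sgVec n = sgVec n := hg
  -- Step 1: augmentation of every entry
  have key : ∀ (k j : Fin n), aug n ((g : Matrix (Fin n) (Fin n) (LaurentR n)) k j)
      = if k = j then 1 else 0 := by
    intro k j
    have hrow : ∑ l, (g : Matrix (Fin n) (Fin n) (LaurentR n)) k l * sg l = sg k := by
      have := congrFun hg' k
      simpa [Matrix.mulVec, dotProduct, sgVec] using this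
    have h2 := congrArg (PhiJ n j) hrow
    rw [map_sum] at h2
    simp only [_root_.map_mul, PhiJ_sg, apply_ite (fun z : ℤ => (z : DualNumber ℤ)),
      Int.cast_one, Int.cast_zero, mul_ite, mul_one, mul_zero, ite_mul, one_mul,
      zero_mul] at h2
    rw [Finset.sum_ite_eq' Finset.univ j
      (fun l => PhiJ n j ((g : Matrix (Fin n) (Fin n) (LaurentR n)) k l) * ε),
      if_pos (Finset.mem_univ j)] at h2
    have h3 := congrArg TrivSqZeroExt.snd h2
    simp only [TrivSqZeroExt.snd_mul, DualNumber.snd_eps, DualNumber.fst_eps,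
      smul_eq_mul, mul_one, mul_zero, add_zero, zero_mul, zero_add] at h3
    rw [fst_PhiJ] at h3
    split_ifs with hkj
    · simpa [hkj] using h3
    · simpa [hkj] using h3
  -- Step 2: determinant has augmentation 1
  have hdet1 : aug n (g : Matrix (Fin n) (Fin n) (LaurentR n)).det = 1 := by
    rw [show aug n (g : Matrix (Fin n) (Fin n) (LaurentR n)).det
      = (aug n).toRingHom (g : Matrix (Fin n) (Fin n) (LaurentR n)).det from rfl,
      RingHom.map_det (aug n).toRingHom (g : Matrix (Fin n) (Fin n) (LaurentR n))]
    have hm : (aug n).toRingHom.mapMatrix (g : Matrix (Fin n) (Fin n) (LaurentR n)) = 1 := by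
      ext k j
      simp only [RingHom.mapMatrix_apply, Matrix.map_apply, Matrix.one_apply]
      exact key k j
    rw [hm, Matrix.det_one]
  -- Step 3: determinant is a unit, hence a signed monomial
  have hmul : (g : Matrix (Fin n) (Fin n) (LaurentR n)).det *
      ((g⁻¹ : GL (Fin n) (LaurentR n)) : Matrix (Fin n) (Fin n) (LaurentR n)).det = 1 := by
    rw [← Matrix.det_mul, ← Units.val_mul, mul_inv_cancel, Units.val_one, Matrix.det_one]
  obtain ⟨a, c, hc, hfe⟩ := unit_single (A := Lex (Fin n →₀ ℤ)) hmul
  have hfe' : (g : Matrix (Fin n) (Fin n) (LaurentR n)).det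
      = AddMonoidAlgebra.single (ofLex a) c := hfe
  have hc1 : c = 1 := by
    rw [hfe', aug_single] at hdet1
    exact hdet1
  refine ⟨fun r => ofLex a r, ?_⟩
  have hprod : ∏ r : Fin n, ((Xu r ^ (ofLex a r) : (LaurentR n)ˣ) : LaurentR n)
      = ((unitHom n (Multiplicative.ofAdd (ofLex a)) : (LaurentR n)ˣ) : LaurentR n) := by
    rw [← prod_Xu_zpow]
    exact (map_prod (Units.coeHom (LaurentR n)) _ _).symm
  rw [hprod, hfe', hc1]
  rfl
end
end

section
/- Let n ≥ 1 and m ≥ 1. Then IG_{n,m²} ⊆ 𝕁_m; i.e. for every I_n + A ∈ IA_n all of whose entries of A lie in H_{n,m²}, every entry of A lies in the ideal J_m = Σ_{r=1}^n σ_r³μ_{r,m}R_n + 𝔄_n²·mR_n + 𝔄_n·m²R_n, and det(I_n + A) = ∏_{r=1}^n x_r^{s_r m²} for some integers s_1,…,s_n. -/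
noncomputable section

open Matrix

/-! ### Auxiliary machinery for Statement 14 -/

namespace S14

open AddMonoidAlgebra Finset

/-- The unit `1 + ε` of the dual numbers. -/
def epsU (C : Type*) [CommRing C] : (DualNumber C)ˣ where
  val := 1 + DualNumber.eps
  inv := 1 - DualNumber.eps
  val_inv := by
    rw [show ((1:DualNumber C)+DualNumber.eps)*(1-DualNumber.eps)
      = 1 - DualNumber.eps*DualNumber.eps from by ring, DualNumber.eps_mul_eps, sub_zero]
  inv_val := by
    rw [show ((1:DualNumber C)-DualNumber.eps)*(1+DualNumber.eps)
      = 1 - DualNumber.eps*DualNumber.eps from by ring, DualNumber.eps_mul_eps, sub_zero]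

lemma epsU_zpow (C : Type*) [CommRing C] (k : ℤ) :
    ((epsU C ^ k : (DualNumber C)ˣ) : DualNumber C)
      = 1 + (k : DualNumber C) * DualNumber.eps := by
  induction k using Int.induction_on with
  | zero => simp
  | succ i ih =>
      rw [_root_.zpow_add_one, Units.val_mul, ih]
      show (1 + ((i:ℤ) : DualNumber C) * DualNumber.eps) * (1 + DualNumber.eps) = _
      push_cast
      linear_combination ((i:ℕ) : DualNumber C) * DualNumber.eps_mul_eps (R := C)
  | pred i ih =>
      rw [_root_.zpow_sub_one, Units.val_mul, ih]
      show (1 + ((-i:ℤ) : DualNumber C) * DualNumber.eps) * (1 - DualNumber.eps) = _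
      push_cast
      linear_combination (((i:ℕ) : DualNumber C)) * DualNumber.eps_mul_eps (R := C)

/-- The monoid hom sending the group element `a` to `w ^ (a r)`. -/
def monHom {n : ℕ} (r : Fin n) {C : Type*} [CommRing C] (w : Cˣ) :
    Multiplicative (Fin n →₀ ℤ) →* C :=
  (Units.coeHom C).comp ((zpowersHom Cˣ w).comp
    (AddMonoidHom.toMultiplicative (Finsupp.applyAddHom (M := ℤ) r)))

/-- Evaluation algebra homomorphism out of the Laurent ring. -/
def evalA (n : ℕ) (C : Type*) [CommRing C] (F : Multiplicative (Fin n →₀ ℤ) →* C) :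
    LaurentR n →ₐ[ℤ] C := AddMonoidAlgebra.lift ℤ C _ F

lemma evalA_single {n : ℕ} (r : Fin n) {C : Type*} [CommRing C] (w : Cˣ)
    (a : Fin n →₀ ℤ) (c : ℤ) :
    evalA n C (monHom r w) (AddMonoidAlgebra.single a c) = c • ((w ^ (a r) : Cˣ) : C) := by
  rw [evalA, AddMonoidAlgebra.lift_single]
  rfl

/-- The homomorphism `x_r ↦ 1 + ε`, `x_j ↦ 1` into dual numbers. -/
def theta {n : ℕ} (r : Fin n) (C : Type*) [CommRing C] : LaurentR n →ₐ[ℤ] DualNumber C :=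
  evalA n (DualNumber C) (monHom r (epsU C))

lemma Xv_single {n : ℕ} (i : Fin n) :
    Xv i = AddMonoidAlgebra.single (Finsupp.single i 1) (1:ℤ) := rfl

lemma theta_single {n : ℕ} (r : Fin n) {C : Type*} [CommRing C] (a : Fin n →₀ ℤ) (c : ℤ) :
    theta r C (AddMonoidAlgebra.single a c) = c • ((epsU C ^ (a r) : (DualNumber C)ˣ) : DualNumber C) :=
  evalA_single r (epsU C) a c

lemma theta_sg {n : ℕ} (r j : Fin n) (C : Type*) [CommRing C] :
    theta r C (sg j) = if j = r then DualNumber.eps else 0 := by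
  rw [sg, _root_.map_sub, _root_.map_one, Xv_single, theta_single, Finsupp.single_apply]
  split_ifs with h
  · rw [zpow_one, one_smul]
    show (1 + DualNumber.eps) - 1 = DualNumber.eps
    ring
  · rw [zpow_zero, one_smul, Units.val_one, sub_self]

/-- The augmentation homomorphism `x ↦ 1`. -/
def augE (n : ℕ) : LaurentR n →ₐ[ℤ] ℤ := AddMonoidAlgebra.lift ℤ ℤ _ 1

lemma augE_single {n : ℕ} (a : Fin n →₀ ℤ) (c : ℤ) :
    augE n (AddMonoidAlgebra.single a c) = c := by
  rw [augE, AddMonoidAlgebra.lift_single]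
  simp

lemma augE_sg {n : ℕ} (j : Fin n) : augE n (sg j) = 0 := by
  rw [sg, _root_.map_sub, _root_.map_one, Xv_single, augE_single, sub_self]

lemma sg_mem_augI {n : ℕ} (j : Fin n) : sg j ∈ augI n :=
  Ideal.subset_span ⟨j, rfl⟩

lemma theta_aug {n : ℕ} (r : Fin n) (C : Type*) [CommRing C] :
    ∀ a ∈ augI n, theta r C a ∈ Ideal.span {(DualNumber.eps : DualNumber C)} := by
  intro a ha
  have hle : augI n ≤ Ideal.comap (theta r C).toRingHom
      (Ideal.span {(DualNumber.eps : DualNumber C)}) := by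
    rw [augI]
    refine Ideal.span_le.2 ?_
    rintro _ ⟨j, rfl⟩
    rw [SetLike.mem_coe, Ideal.mem_comap]
    show theta r C (sg j) ∈ _
    rw [theta_sg]
    split_ifs
    · exact Ideal.subset_span rfl
    · exact zero_mem _
  exact hle ha

lemma theta_augsq {n : ℕ} (r : Fin n) (C : Type*) [CommRing C] :
    ∀ a ∈ augI n * augI n, theta r C a = 0 := by
  intro a ha
  have hle : augI n * augI n ≤ RingHom.ker (theta r C).toRingHom := by
    refine Ideal.mul_le.2 ?_
    intro x hx y hy
    obtain ⟨c, hc⟩ := Ideal.mem_span_singleton'.1 (theta_aug r C x hx)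
    obtain ⟨d, hd⟩ := Ideal.mem_span_singleton'.1 (theta_aug r C y hy)
    rw [RingHom.mem_ker]
    show theta r C (x * y) = 0
    rw [_root_.map_mul, ← hc, ← hd]
    linear_combination (c * d) * DualNumber.eps_mul_eps (R := C)
  exact hle ha

lemma theta_JmI {n : ℕ} (r : Fin n) (m : ℕ) :
    JmI n m ≤ RingHom.ker (theta r (ZMod (m^2))).toRingHom := by
  rw [JmI, Submodule.add_eq_sup, Submodule.add_eq_sup]
  refine sup_le (sup_le ?_ ?_) ?_
  · refine Ideal.span_le.2 ?_
    rintro _ ⟨j, rfl⟩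
    rw [SetLike.mem_coe, RingHom.mem_ker]
    show theta r (ZMod (m^2)) (sg j ^ 3 * muv j m) = 0
    rw [show sg j ^ 3 * muv j m = (sg j * sg j) * (sg j * muv j m) from by ring, _root_.map_mul,
      theta_augsq r _ _ (Ideal.mul_mem_mul (sg_mem_augI j) (sg_mem_augI j)), zero_mul]
  · refine Ideal.mul_le_left.trans ?_
    intro x hx
    rw [pow_two] at hx
    exact RingHom.mem_ker.2 (theta_augsq r _ x hx)
  · refine Ideal.mul_le.2 ?_
    intro x hx y hy
    obtain ⟨c, hc⟩ := Ideal.mem_span_singleton'.1 hy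
    rw [RingHom.mem_ker]
    show theta r (ZMod (m^2)) (x * y) = 0
    have hm2 : ((m^2 : ℕ) : DualNumber (ZMod (m^2))) = 0 := by
      rw [← _root_.map_natCast (algebraMap (ZMod (m^2)) (DualNumber (ZMod (m^2)))),
        ZMod.natCast_self, _root_.map_zero]
    rw [_root_.map_mul, ← hc, _root_.map_mul, _root_.map_natCast, hm2, mul_zero, mul_zero]

lemma augE_JmI {n m : ℕ} : JmI n m ≤ RingHom.ker (augE n).toRingHom := by
  have haug : augI n ≤ RingHom.ker (augE n).toRingHom := by
    rw [augI]
    refine Ideal.span_le.2 ?_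
    rintro _ ⟨j, rfl⟩
    rw [SetLike.mem_coe, RingHom.mem_ker]
    exact augE_sg j
  rw [JmI, Submodule.add_eq_sup, Submodule.add_eq_sup]
  refine sup_le (sup_le ?_ ?_) ?_
  · refine Ideal.span_le.2 ?_
    rintro _ ⟨j, rfl⟩
    rw [SetLike.mem_coe, RingHom.mem_ker]
    show augE n (sg j ^ 3 * muv j m) = 0
    rw [show sg j ^ 3 * muv j m = sg j * (sg j ^ 2 * muv j m) from by ring, _root_.map_mul,
      augE_sg, zero_mul]
  · exact Ideal.mul_le_left.trans ((Ideal.pow_le_self two_ne_zero).trans haug)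
  · exact Ideal.mul_le_left.trans haug

lemma Xu_zpow {n : ℕ} (i : Fin n) (k : ℤ) :
    ((Xu i ^ k : (LaurentR n)ˣ) : LaurentR n)
      = AddMonoidAlgebra.single (Finsupp.single i k) 1 := by
  induction k using Int.induction_on with
  | zero => rw [zpow_zero, Units.val_one, Finsupp.single_zero, AddMonoidAlgebra.one_def]
  | succ j ih =>
      rw [_root_.zpow_add_one, Units.val_mul, ih]
      show AddMonoidAlgebra.single (Finsupp.single i (j:ℤ)) 1
        * AddMonoidAlgebra.single (Finsupp.single i 1) 1 = _
      rw [AddMonoidAlgebra.single_mul_single, ← Finsupp.single_add, mul_one]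
  | pred j ih =>
      rw [_root_.zpow_sub_one, Units.val_mul, ih]
      show AddMonoidAlgebra.single (Finsupp.single i (-j:ℤ)) 1
        * AddMonoidAlgebra.single (-Finsupp.single i 1) 1 = _
      rw [AddMonoidAlgebra.single_mul_single, ← Finsupp.single_neg, ← Finsupp.single_add, mul_one]
      ring_nf

lemma unit_sub_one_mem {n : ℕ} (i : Fin n) (k : ℤ) :
    ((Xu i ^ k : (LaurentR n)ˣ) : LaurentR n) - 1 ∈ augI n := by
  have hXu : ((Xu i : (LaurentR n)ˣ) : LaurentR n) - 1 = sg i := rfl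
  have hXuinv : (((Xu i)⁻¹ : (LaurentR n)ˣ) : LaurentR n) - 1 ∈ augI n := by
    have h1 : (((Xu i)⁻¹ : (LaurentR n)ˣ) : LaurentR n) - 1
        = -((((Xu i)⁻¹ : (LaurentR n)ˣ) : LaurentR n) * (((Xu i : (LaurentR n)ˣ) : LaurentR n) - 1)) := by
      have h2 : (((Xu i)⁻¹ : (LaurentR n)ˣ) : LaurentR n) * ((Xu i : (LaurentR n)ˣ) : LaurentR n) = 1 := by
        rw [← Units.val_mul, inv_mul_cancel, Units.val_one]
      linear_combination h2
    rw [h1, hXu]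
    exact neg_mem (Ideal.mul_mem_left _ _ (sg_mem_augI i))
  induction k using Int.induction_on with
  | zero => rw [zpow_zero, Units.val_one, sub_self]; exact zero_mem _
  | succ j ih =>
      have h1 : ((Xu i ^ ((j:ℤ)+1) : (LaurentR n)ˣ) : LaurentR n) - 1
          = (((Xu i ^ (j:ℤ) : (LaurentR n)ˣ) : LaurentR n) - 1) * ((Xu i : (LaurentR n)ˣ) : LaurentR n)
            + (((Xu i : (LaurentR n)ˣ) : LaurentR n) - 1) := by
        rw [_root_.zpow_add_one, Units.val_mul]; ring
      rw [h1, hXu]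
      exact add_mem (Ideal.mul_mem_right _ _ ih) (sg_mem_augI i)
  | pred j ih =>
      have h1 : ((Xu i ^ (-(j:ℤ)-1) : (LaurentR n)ˣ) : LaurentR n) - 1
          = (((Xu i ^ (-(j:ℤ)) : (LaurentR n)ˣ) : LaurentR n) - 1) * (((Xu i)⁻¹ : (LaurentR n)ˣ) : LaurentR n)
            + ((((Xu i)⁻¹ : (LaurentR n)ˣ) : LaurentR n) - 1) := by
        rw [_root_.zpow_sub_one, Units.val_mul]; ring
      rw [h1]
      exact add_mem (Ideal.mul_mem_right _ _ ih) hXuinv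

lemma single_sub_one_mem {n : ℕ} (a : Fin n →₀ ℤ) :
    (AddMonoidAlgebra.single a 1 : LaurentR n) - 1 ∈ augI n := by
  induction a using Finsupp.induction with
  | zero => rw [← AddMonoidAlgebra.one_def, sub_self]; exact zero_mem _
  | single_add i b f hif hb ih =>
      have h1 : (AddMonoidAlgebra.single (Finsupp.single i b + f) 1 : LaurentR n)
          = AddMonoidAlgebra.single (Finsupp.single i b) 1 * AddMonoidAlgebra.single f 1 := by
        rw [AddMonoidAlgebra.single_mul_single, mul_one]
      have h2 : (AddMonoidAlgebra.single (Finsupp.single i b) 1 : LaurentR n) - 1 ∈ augI n := by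
        rw [← Xu_zpow]
        exact unit_sub_one_mem i b
      rw [h1, show (AddMonoidAlgebra.single (Finsupp.single i b) 1 : LaurentR n)
          * AddMonoidAlgebra.single f 1 - 1
        = ((AddMonoidAlgebra.single (Finsupp.single i b) 1 : LaurentR n) - 1)
            * AddMonoidAlgebra.single f 1
          + ((AddMonoidAlgebra.single f 1 : LaurentR n) - 1) from by ring]
      exact add_mem (Ideal.mul_mem_right _ _ h2) ih

lemma sub_augE_mem {n : ℕ} (f : LaurentR n) :
    f - ((augE n f : ℤ) : LaurentR n) ∈ augI n := by
  induction f using AddMonoidAlgebra.induction_on with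
  | of g =>
      rw [AddMonoidAlgebra.of_apply, toAdd_ofAdd, augE_single]
      push_cast
      exact single_sub_one_mem g
  | add f g hf hg =>
      rw [_root_.map_add]
      push_cast
      rw [show f + g - ((augE n f : LaurentR n) + (augE n g : LaurentR n))
        = (f - (augE n f : LaurentR n)) + (g - (augE n g : LaurentR n)) from by ring]
      exact add_mem hf hg
  | smul r f hf =>
      have hr : algebraMap ℤ (LaurentR n) r = (r : LaurentR n) := by
        exact eq_intCast _ r
      rw [Algebra.smul_def, hr, _root_.map_mul, map_intCast]
      push_cast
      rw [show (r : LaurentR n) * f - (r : LaurentR n) * (augE n f : LaurentR n)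
        = (r : LaurentR n) * (f - (augE n f : LaurentR n)) from by ring]
      exact Ideal.mul_mem_left _ _ hf

lemma geom_shift {A : Type*} [CommRing A] (y : A) (m : ℕ) :
    (∑ i ∈ Finset.range m, y ^ i)
      = m + (∑ i ∈ Finset.range m, ∑ j ∈ Finset.range i, y ^ j) * (y - 1) := by
  rw [Finset.sum_mul]
  have h : ∀ i ∈ Finset.range m, (∑ j ∈ Finset.range i, y ^ j) * (y - 1) = y ^ i - 1 :=
    fun i _ => geom_sum_mul y i
  rw [Finset.sum_congr rfl h, Finset.sum_sub_distrib]
  simp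

lemma JmI_piece1 {n : ℕ} (m : ℕ) :
    Ideal.span (Set.range fun r : Fin n => sg r ^ 3 * muv r m) ≤ JmI n m := by
  rw [JmI, Submodule.add_eq_sup, Submodule.add_eq_sup]
  exact le_sup_of_le_left le_sup_left

lemma JmI_piece2 {n : ℕ} (m : ℕ) : augI n ^ 2 * OI n m ≤ JmI n m := by
  rw [JmI, Submodule.add_eq_sup, Submodule.add_eq_sup]
  exact le_sup_of_le_left le_sup_right

lemma JmI_piece3 {n : ℕ} (m : ℕ) : augI n * OI n (m ^ 2) ≤ JmI n m := by
  rw [JmI, Submodule.add_eq_sup, Submodule.add_eq_sup]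
  exact le_sup_right

lemma m2_mem_OI {n : ℕ} (m : ℕ) : ((m ^ 2 : ℕ) : LaurentR n) ∈ OI n (m ^ 2) :=
  Ideal.subset_span rfl

lemma XmSq_mem {n : ℕ} (r : Fin n) (m : ℕ) : Xv r ^ (m ^ 2) - 1 ∈ JmI n m := by
  set P : LaurentR n := ∑ i ∈ Finset.range m, ∑ j ∈ Finset.range i, Xv r ^ j with hP
  set Q : LaurentR n := ∑ i ∈ Finset.range m, ∑ j ∈ Finset.range i, (Xv r ^ m) ^ j with hQ
  have hmu : muv r m * sg r = Xv r ^ m - 1 := by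
    unfold muv sg
    exact geom_sum_mul _ _
  have hnu : (∑ i ∈ Finset.range m, (Xv r ^ m) ^ i) * (Xv r ^ m - 1) = (Xv r ^ m) ^ m - 1 :=
    geom_sum_mul _ _
  have hM : muv r m = m + P * sg r := by
    unfold muv sg
    exact geom_shift _ _
  have hN : (∑ i ∈ Finset.range m, (Xv r ^ m) ^ i) = m + Q * (Xv r ^ m - 1) :=
    geom_shift _ _
  have key : Xv r ^ (m ^ 2) - 1
      = (m : LaurentR n) ^ 2 * sg r + (m : LaurentR n) * P * sg r ^ 2
        + (m : LaurentR n) * Q * muv r m * sg r ^ 2 + (Q * P) * (sg r ^ 3 * muv r m) := by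
    rw [pow_two m, pow_mul, ← hnu, ← hmu, hN, ← hmu, hM]
    ring
  rw [key]
  refine add_mem (add_mem (add_mem ?_ ?_) ?_) ?_
  · refine JmI_piece3 m ?_
    have h1 : sg r * ((m ^ 2 : ℕ) : LaurentR n) ∈ augI n * OI n (m ^ 2) :=
      Ideal.mul_mem_mul (sg_mem_augI r) (m2_mem_OI m)
    have h2 : (m : LaurentR n) ^ 2 * sg r = sg r * ((m ^ 2 : ℕ) : LaurentR n) := by
      push_cast
      ring
    rw [h2]
    exact h1
  · refine JmI_piece2 m ?_
    have h1 : sg r ^ 2 * ((m : ℕ) : LaurentR n) ∈ augI n ^ 2 * OI n m :=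
      Ideal.mul_mem_mul (Ideal.pow_mem_pow (sg_mem_augI r) 2) (Ideal.subset_span rfl)
    have h2 : (m : LaurentR n) * P * sg r ^ 2 = P * (sg r ^ 2 * ((m : ℕ) : LaurentR n)) := by
      ring
    rw [h2]
    exact Ideal.mul_mem_left _ _ h1
  · refine JmI_piece2 m ?_
    have h1 : sg r ^ 2 * ((m : ℕ) : LaurentR n) ∈ augI n ^ 2 * OI n m :=
      Ideal.mul_mem_mul (Ideal.pow_mem_pow (sg_mem_augI r) 2) (Ideal.subset_span rfl)
    have h2 : (m : LaurentR n) * Q * muv r m * sg r ^ 2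
        = (Q * muv r m) * (sg r ^ 2 * ((m : ℕ) : LaurentR n)) := by
      ring
    rw [h2]
    exact Ideal.mul_mem_left _ _ h1
  · exact JmI_piece1 m (Ideal.mul_mem_left _ _ (Ideal.subset_span ⟨r, rfl⟩))

lemma augE_Xv {n : ℕ} (r : Fin n) : augE n (Xv r) = 1 := by
  rw [Xv_single, augE_single]

lemma mem_HI_decomp {n : ℕ} (m : ℕ) {a : LaurentR n} (ha : a ∈ HI n (m ^ 2)) :
    a - ((augE n a : ℤ) : LaurentR n) ∈ JmI n m ∧ ((m : ℤ) ^ 2 ∣ augE n a) := by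
  refine Submodule.span_induction ?_ ?_ ?_ ?_ ha
  · rintro x (⟨r, rfl⟩ | hx)
    · constructor
      · have h1 : augE n (Xv r ^ (m ^ 2) - 1) = 0 := by
          rw [_root_.map_sub, _root_.map_one, _root_.map_pow, augE_Xv, one_pow, sub_self]
        rw [h1]
        push_cast
        rw [sub_zero]
        exact XmSq_mem r m
      · have h1 : augE n (Xv r ^ (m ^ 2) - 1) = 0 := by
          rw [_root_.map_sub, _root_.map_one, _root_.map_pow, augE_Xv, one_pow, sub_self]
        rw [h1]
        exact Dvd.intro 0 rfl
    · rw [Set.mem_singleton_iff] at hx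
      subst hx
      constructor
      · rw [map_natCast]
        push_cast
        rw [sub_self]
        exact zero_mem _
      · rw [map_natCast]
        push_cast
        exact Dvd.intro 1 (by ring)
  · constructor
    · rw [_root_.map_zero]
      push_cast
      rw [sub_zero]
      exact zero_mem _
    · rw [_root_.map_zero]
      exact dvd_zero _
  · intro x y _ _ hx hy
    constructor
    · rw [_root_.map_add]
      push_cast
      rw [show x + y - ((augE n x : LaurentR n) + (augE n y : LaurentR n))
        = (x - (augE n x : LaurentR n)) + (y - (augE n y : LaurentR n)) from by ring]
      exact add_mem hx.1 hy.1
    · rw [_root_.map_add]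
      exact dvd_add hx.2 hy.2
  · intro c x _ hx
    obtain ⟨hmem, t, ht⟩ := hx
    rw [smul_eq_mul]
    constructor
    · rw [_root_.map_mul]
      have key : c * x - ((augE n c * augE n x : ℤ) : LaurentR n)
          = c * (x - ((augE n x : ℤ) : LaurentR n))
            + (t : LaurentR n) * ((c - ((augE n c : ℤ) : LaurentR n)) * ((m ^ 2 : ℕ) : LaurentR n)) := by
        rw [ht]
        push_cast
        ring
      rw [key]
      refine add_mem (Ideal.mul_mem_left _ _ hmem) (Ideal.mul_mem_left _ _ ?_)
      exact JmI_piece3 m (Ideal.mul_mem_mul (sub_augE_mem c) (m2_mem_OI m))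
    · rw [_root_.map_mul, ht]
      exact ⟨augE n c * t, by ring⟩

/-- Row relation: the rows of `matOf g - 1` pair to zero against `σ⃗`. -/
lemma row_zero {n : ℕ} (g : IAn n) (k : Fin n) :
    ∑ j, (matOf g - 1) k j * sg j = 0 := by
  have h := congrFun g.2 k
  have h1 : (matOf g *ᵥ sgVec n) k = sgVec n k := h
  rw [Matrix.mulVec, dotProduct] at h1
  have h2 : ∑ j, (1 : Matrix (Fin n) (Fin n) (LaurentR n)) k j * sg j = sg k := by
    simp [Matrix.one_apply, ite_mul]
  calc ∑ j, (matOf g - 1) k j * sg j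
      = ∑ j, (matOf g k j * sg j - (1 : Matrix (Fin n) (Fin n) (LaurentR n)) k j * sg j) := by
        refine Finset.sum_congr rfl fun j _ => ?_
        rw [Matrix.sub_apply]
        ring
    _ = (∑ j, matOf g k j * sgVec n j) - ∑ j, (1 : Matrix (Fin n) (Fin n) (LaurentR n)) k j * sg j := by
        rw [Finset.sum_sub_distrib]
        rfl
    _ = 0 := by rw [h1, h2]; show sg k - sg k = 0; exact sub_self _

/-- The augmentation of each entry of `matOf g - 1` vanishes. -/
lemma augE_entry_zero {n : ℕ} (g : IAn n) (k l : Fin n) :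
    augE n ((matOf g - 1) k l) = 0 := by
  classical
  set A : Matrix (Fin n) (Fin n) (LaurentR n) := matOf g - 1 with hA
  have hrow := row_zero g k
  have hsplit : ∀ j, A k j * sg j
      = (A k j - ((augE n (A k j) : ℤ) : LaurentR n)) * sg j
        + ((augE n (A k j) : ℤ) : LaurentR n) * sg j := by
    intro j
    ring
  have hrow2 : (∑ j, ((augE n (A k j) : ℤ) : LaurentR n) * sg j)
      = - ∑ j, (A k j - ((augE n (A k j) : ℤ) : LaurentR n)) * sg j := by
    have h3 := hrow
    rw [Finset.sum_congr rfl (fun j (_ : j ∈ Finset.univ) => hsplit j),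
      Finset.sum_add_distrib] at h3
    linear_combination h3
  have hT : (∑ j, ((augE n (A k j) : ℤ) : LaurentR n) * sg j) ∈ augI n * augI n := by
    rw [hrow2]
    refine neg_mem (Submodule.sum_mem _ fun j _ => ?_)
    exact Ideal.mul_mem_mul (sub_augE_mem (A k j)) (sg_mem_augI j)
  have h0 : theta l ℤ (∑ j, ((augE n (A k j) : ℤ) : LaurentR n) * sg j) = 0 :=
    theta_augsq l ℤ _ hT
  rw [map_sum] at h0
  have h1 : ∀ j : Fin n, theta l ℤ (((augE n (A k j) : ℤ) : LaurentR n) * sg j)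
      = ((augE n (A k j) : ℤ) : DualNumber ℤ) * theta l ℤ (sg j) := by
    intro j
    rw [_root_.map_mul, map_intCast]
  rw [Finset.sum_congr rfl (fun j _ => h1 j)] at h0
  rw [Finset.sum_eq_single l (fun j _ hne => by rw [theta_sg, if_neg hne, mul_zero])
    (fun hl => absurd (Finset.mem_univ l) hl)] at h0
  rw [theta_sg, if_pos rfl] at h0
  have h2 := congrArg TrivSqZeroExt.snd h0
  simpa using h2

/-- The additive embedding into the lexicographic order. -/
def DLex (n : ℕ) : (Fin n →₀ ℤ) →+ Lex (Fin n →₀ ℤ) where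
  toFun := toLex
  map_zero' := rfl
  map_add' := fun _ _ => rfl

lemma DLex_inj (n : ℕ) : Function.Injective (DLex n) := fun _ _ h => h

lemma mul_apply_max {G Γ : Type*} [AddCommGroup G] [AddCommGroup Γ] [LinearOrder Γ] [IsOrderedAddMonoid Γ]
    (D : G →+ Γ) (hD : Function.Injective D)
    {f g : AddMonoidAlgebra ℤ G} {af ag : G}
    (haf : ∀ a ∈ f.coeff.support, D a ≤ D af) (hag : ∀ a ∈ g.coeff.support, D a ≤ D ag) :
    (f * g).coeff (af + ag) = f.coeff af * g.coeff ag := by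
  classical
  rw [AddMonoidAlgebra.coeff_mul]
  rw [Finsupp.sum]
  rw [Finset.sum_eq_single af]
  · rw [Finsupp.sum, Finset.sum_eq_single ag]
    · rw [if_pos rfl]
    · intro b hb hne
      exact if_neg (fun he => hne (by exact add_left_cancel he))
    · intro hns
      rw [if_pos rfl, Finsupp.notMem_support_iff.1 hns, mul_zero]
  · intro a ha hne
    apply Finset.sum_eq_zero
    intro b hb
    apply if_neg
    intro he
    apply hne
    apply hD
    have h1 : D a + D b = D af + D ag := by rw [← _root_.map_add, ← _root_.map_add, he]
    have h2 : D b ≤ D ag := hag b hb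
    have h3 : D a ≤ D af := haf a ha
    refine le_antisymm h3 ?_
    by_contra hlt
    push_neg at hlt
    exact absurd h1 (ne_of_lt (add_lt_add_of_lt_of_le hlt h2))
  · intro hns
    apply Finset.sum_eq_zero
    intro b hb
    simp only [Finsupp.notMem_support_iff.1 hns, zero_mul, ite_self]

theorem units_triv {G Γ : Type*} [AddCommGroup G] [AddCommGroup Γ] [LinearOrder Γ] [IsOrderedAddMonoid Γ]
    (D : G →+ Γ) (hD : Function.Injective D)
    {f g : AddMonoidAlgebra ℤ G} (h : f * g = 1) :
    ∃ (a : G) (c : ℤ), IsUnit c ∧ f = AddMonoidAlgebra.single a c := by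
  classical
  have hf : f ≠ 0 := by rintro rfl; simp at h
  have hg : g ≠ 0 := by rintro rfl; simp at h
  obtain ⟨Af, hAfm, hAf⟩ := f.coeff.support.exists_max_image D (Finsupp.support_nonempty_iff.2 (by simpa using hf))
  obtain ⟨Ag, hAgm, hAg⟩ := g.coeff.support.exists_max_image D (Finsupp.support_nonempty_iff.2 (by simpa using hg))
  obtain ⟨af, hafm, haf⟩ := f.coeff.support.exists_min_image D (Finsupp.support_nonempty_iff.2 (by simpa using hf))
  obtain ⟨ag, hagm, hag⟩ := g.coeff.support.exists_min_image D (Finsupp.support_nonempty_iff.2 (by simpa using hg))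
  have hone : ∀ a : G, (1 : AddMonoidAlgebra ℤ G).coeff a = if a = 0 then 1 else 0 := by
    intro a
    rw [AddMonoidAlgebra.one_def, AddMonoidAlgebra.coeff_single, Finsupp.single_apply]
    simp [eq_comm]
  have hDneg : Function.Injective (⇑(-D)) := by
    intro a b hab
    simp only [AddMonoidHom.neg_apply, neg_inj] at hab
    exact hD hab
  have hmax : (f * g).coeff (Af + Ag) = f.coeff Af * g.coeff Ag := mul_apply_max D hD hAf hAg
  have hmin : (f * g).coeff (af + ag) = f.coeff af * g.coeff ag := by
    refine mul_apply_max (-D) hDneg ?_ ?_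
    · intro a ha; simpa using haf a ha
    · intro a ha; simpa using hag a ha
  have hfAf : f.coeff Af ≠ 0 := Finsupp.mem_support_iff.1 hAfm
  have hgAg : g.coeff Ag ≠ 0 := Finsupp.mem_support_iff.1 hAgm
  have hfaf : f.coeff af ≠ 0 := Finsupp.mem_support_iff.1 hafm
  have hgag : g.coeff ag ≠ 0 := Finsupp.mem_support_iff.1 hagm
  have hA0 : Af + Ag = 0 := by
    by_contra hne
    rw [h, hone, if_neg hne] at hmax
    exact mul_ne_zero hfAf hgAg hmax.symm
  have ha0 : af + ag = 0 := by
    by_contra hne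
    rw [h, hone, if_neg hne] at hmin
    exact mul_ne_zero hfaf hgag hmin.symm
  have hDA : D Af + D Ag = 0 := by rw [← _root_.map_add, hA0, _root_.map_zero]
  have hDa : D af + D ag = 0 := by rw [← _root_.map_add, ha0, _root_.map_zero]
  have e1 : D af = D Af := by
    have h1 : D af ≤ D Af := haf Af hAfm
    have h2 : D ag ≤ D Ag := hag Ag hAgm
    by_contra hne
    have : D af + D ag < D Af + D Ag := add_lt_add_of_lt_of_le (lt_of_le_of_ne h1 hne) h2
    rw [hDA, hDa] at this
    exact lt_irrefl _ this
  have hsub : f.coeff.support ⊆ {Af} := by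
    intro a ha
    rw [Finset.mem_singleton]
    apply hD
    refine le_antisymm (hAf a ha) ?_
    rw [← e1]
    exact haf a ha
  have hfe : f = AddMonoidAlgebra.single Af (f.coeff Af) :=
    AddMonoidAlgebra.coeff_injective (Finsupp.support_subset_singleton.1 hsub)
  refine ⟨Af, f.coeff Af, ?_, hfe⟩
  apply IsUnit.of_mul_eq_one (g.coeff Ag)
  calc f.coeff Af * g.coeff Ag = (f * g).coeff (Af + Ag) := hmax.symm
    _ = (1 : AddMonoidAlgebra ℤ G).coeff 0 := by rw [h, hA0]
    _ = 1 := by rw [hone]; simp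

lemma prod_single {n : ℕ} (s : Finset (Fin n)) (b : Fin n → (Fin n →₀ ℤ)) :
    (∏ r ∈ s, (AddMonoidAlgebra.single (b r) 1 : LaurentR n))
      = AddMonoidAlgebra.single (∑ r ∈ s, b r) 1 := by
  classical
  induction s using Finset.induction_on with
  | empty => simp [AddMonoidAlgebra.one_def]
  | insert a s hns ih =>
      rw [Finset.prod_insert hns, Finset.sum_insert hns, ih,
        AddMonoidAlgebra.single_mul_single, mul_one]

lemma sum_single_eq {n : ℕ} (a : Fin n →₀ ℤ) :
    ∑ r : Fin n, Finsupp.single r (a r) = a := by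
  rw [← Finsupp.sum_fintype a Finsupp.single (fun i => Finsupp.single_zero i)]
  exact Finsupp.sum_single a

end S14

/-- `IG_{n,m²} ⊆ 𝕁_m`: for every `I_n + A ∈ IA_n` all of whose entries of
`A` lie in `H_{n,m²}`, every entry of `A` lies in
`J_m = Σ_r σ_r³μ_{r,m}R_n + 𝔄_n²·mR_n + 𝔄_n·m²R_n` and
`det(I_n + A) = ∏_r x_r^{s_r·m²}` for some integers `s_r`. -/
theorem statement_14 (n m : ℕ) (hn : 1 ≤ n) (hm : 1 ≤ m) (g : IAn n)
    (hg : g ∈ IGnm n (m ^ 2)) :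
    (∀ k l, (matOf g - 1) k l ∈ JmI n m) ∧ detMon n m g := by
  classical
  have hentry : ∀ k l, (matOf g - 1) k l ∈ JmI n m := by
    intro k l
    obtain ⟨hmem, -⟩ := S14.mem_HI_decomp m (hg k l)
    rw [S14.augE_entry_zero g k l] at hmem
    simpa using hmem
  refine ⟨hentry, ?_⟩
  -- the determinant is a unit
  set Mx : Matrix (Fin n) (Fin n) (LaurentR n) := matOf g with hMx
  have hu : Mx.det * ((((g : GL (Fin n) (LaurentR n))⁻¹ :
      GL (Fin n) (LaurentR n)) : Matrix (Fin n) (Fin n) (LaurentR n)).det) = 1 := by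
    rw [← Matrix.det_mul]
    have : (Mx * (((g : GL (Fin n) (LaurentR n))⁻¹ : GL (Fin n) (LaurentR n)) :
        Matrix (Fin n) (Fin n) (LaurentR n))) = 1 := by
      rw [hMx, matOf, ← Units.val_mul, mul_inv_cancel, Units.val_one]
    rw [this, Matrix.det_one]
  -- det - 1 lies in JmI
  have hdJ : Mx.det - 1 ∈ JmI n m := by
    set q := Ideal.Quotient.mk (JmI n m) with hq
    have hmap : q.mapMatrix Mx = q.mapMatrix 1 := by
      ext i j
      simp only [RingHom.mapMatrix_apply, Matrix.map_apply]
      rw [Ideal.Quotient.eq]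
      have := hentry i j
      rwa [Matrix.sub_apply] at this
    have hdet : q Mx.det = q (1 : LaurentR n) := by
      rw [RingHom.map_det, hmap, ← RingHom.map_det, Matrix.det_one]
    exact Ideal.Quotient.eq.1 hdet
  obtain ⟨a, c, hcu, hfe⟩ := S14.units_triv (S14.DLex n) (S14.DLex_inj n) hu
  -- the coefficient is 1
  have hc1 : c = 1 := by
    have h0 : S14.augE n (Mx.det - 1) = 0 := RingHom.mem_ker.1 (S14.augE_JmI hdJ)
    rw [hfe, _root_.map_sub, _root_.map_one, S14.augE_single] at h0
    linarith [h0]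
  subst hc1
  -- each exponent is divisible by m²
  have hdvd : ∀ r : Fin n, (m : ℤ) ^ 2 ∣ a r := by
    intro r
    have h0 : S14.theta r (ZMod (m ^ 2)) (Mx.det - 1) = 0 :=
      RingHom.mem_ker.1 (S14.theta_JmI r m hdJ)
    rw [hfe, _root_.map_sub, _root_.map_one, S14.theta_single, one_smul,
      S14.epsU_zpow] at h0
    have h1 : ((a r : ℤ) : DualNumber (ZMod (m ^ 2))) * DualNumber.eps = 0 := by
      linear_combination h0
    have h2 := congrArg TrivSqZeroExt.snd h1
    simp only [TrivSqZeroExt.snd_mul, TrivSqZeroExt.snd_zero] at h2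
    have h3 : ((a r : ℤ) : ZMod (m ^ 2)) = 0 := by simpa using h2
    have h4 : ((m ^ 2 : ℕ) : ℤ) ∣ a r := (ZMod.intCast_zmod_eq_zero_iff_dvd (a r) (m ^ 2)).1 h3
    push_cast at h4
    exact h4
  refine ⟨fun r => a r / ((m : ℤ) ^ 2), ?_⟩
  have hs : ∀ r : Fin n, (a r / ((m : ℤ) ^ 2)) * ((m : ℤ) ^ 2) = a r := fun r =>
    Int.ediv_mul_cancel (hdvd r)
  calc Mx.det = AddMonoidAlgebra.single a 1 := by rw [hfe]
    _ = AddMonoidAlgebra.single (∑ r : Fin n, Finsupp.single r (a r)) 1 := by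
        rw [S14.sum_single_eq]
    _ = ∏ r : Fin n, (AddMonoidAlgebra.single (Finsupp.single r (a r)) 1 : LaurentR n) :=
        (S14.prod_single Finset.univ _).symm
    _ = ∏ r : Fin n, ((Xu r ^ (a r / ((m : ℤ) ^ 2) * (m : ℤ) ^ 2) : (LaurentR n)ˣ) : LaurentR n) := by
        refine Finset.prod_congr rfl fun r _ => ?_
        rw [S14.Xu_zpow, hs r]
end
end

section
/- Let n ≥ 4, 2 ≤ u ≤ n and m ≥ 1, and let π_{u−1} : R_n → R_n be the unique ℤ-algebra homomorphism with π_{u−1}(x_r) = x_r for r ≤ u−1 and π_{u−1}(x_r) = 1 for r ≥ u. Suppose b_1,…,b_{u−1} ∈ R_n satisfy: π_{u−1}(b_v) = b_v for each v; each b_v lies in the ideal Σ_{r=1}^{u−1} 𝔄_nσ_rμ_{r,m}R_n + 𝔄_n·mR_n + m²R_n of R_n; and Σ_{v=1}^{u−1} σ_v b_v = 0. Then the matrix I_n + Σ_{v=1}^{u−1} σ_u b_v E_{u,v}, which equals the identity except for the entries σ_u b_1,…,σ_u b_{u−1} in columns 1,…,u−1 of the u-th row, lies in IA_n^m. -/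
noncomputable section

open Matrix

/-! ### Stage 1: ring basics -/

namespace St18
variable {n : ℕ}

lemma Xv_pow (i : Fin n) (k : ℕ) : Xv i ^ k = ((Xu i ^ k : (LaurentR n)ˣ) : LaurentR n) := by
  simp [Xv]

lemma sg_mul_muv (r : Fin n) (m : ℕ) : sg r * muv r m = Xv r ^ m - 1 := by
  rw [sg, muv, mul_comm, geom_sum_mul]

lemma muv_mul_sg (r : Fin n) (m : ℕ) : muv r m * sg r = Xv r ^ m - 1 := by
  rw [mul_comm, sg_mul_muv]

-- one as single
lemma one_def' : (1 : LaurentR n) = AddMonoidAlgebra.single 0 1 := rfl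

lemma sg_ne_zero (v : Fin n) : sg v ≠ 0 := by
  intro h
  have h1 : (Xv v - 1 : LaurentR n) = 0 := h
  have h2 : (Xv v : LaurentR n) = 1 := by linear_combination h1
  have h3 : (AddMonoidAlgebra.single (Finsupp.single v 1) 1 : LaurentR n)
      = AddMonoidAlgebra.single 0 1 := h2
  have h4 : (Finsupp.single v 1 : Fin n →₀ ℤ) = 0 := by
    by_contra hne
    have := AddMonoidAlgebra.single_inj.mp h3
    rcases this with ⟨h5, _⟩ | ⟨h5, _⟩
    · exact hne h5
    · exact one_ne_zero h5
  simpa [Finsupp.single_eq_zero] using h4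


/-! ### Stage 2: retractions and ideal decomposition -/

-- generic extraction from a finite sum of ideals
lemma mem_idealSum {ι : Type*} (s : Finset ι) (J : ι → Ideal (LaurentR n)) (x : LaurentR n)
    (hx : x ∈ ∑ i ∈ s, J i) :
    ∃ f : ι → LaurentR n, (∀ i, f i ∈ J i) ∧ x = ∑ i ∈ s, f i := by
  classical
  induction s using Finset.induction generalizing x with
  | empty =>
    simp only [Finset.sum_empty, Ideal.zero_eq_bot, Ideal.mem_bot] at hx
    exact ⟨0, fun i => (J i).zero_mem, by simp [hx]⟩
  | @insert a s ha ih =>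
    rw [Finset.sum_insert ha] at hx
    rw [Submodule.add_eq_sup, Submodule.mem_sup] at hx
    obtain ⟨y, hy, z, hz, hyz⟩ := hx
    obtain ⟨f, hf, hfz⟩ := ih z hz
    refine ⟨fun i => if i = a then y else f i, ?_, ?_⟩
    · intro i
      by_cases hia : i = a
      · subst hia; simpa using hy
      · simpa [hia] using hf i
    · rw [Finset.sum_insert ha]
      simp only [if_pos rfl, ← hyz]
      congr 1
      rw [hfz]
      exact Finset.sum_congr rfl fun i hi => by
        have : i ≠ a := fun h => ha (h ▸ hi)
        simp [this]

/-- the coordinate-truncation additive map : keep coordinates `≥ w` -/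
def keep (n w : ℕ) : (Fin n →₀ ℤ) →+ (Fin n →₀ ℤ) where
  toFun a := a.filter (fun v => w ≤ v.val)
  map_zero' := by
    classical
    exact Finsupp.filter_zero _
  map_add' a b := by
    classical
    exact Finsupp.filter_add

/-- the retraction `ρ_w : R → R` sending `x_v ↦ 1` for `v < w` and fixing `x_v`, `v ≥ w`. -/
def rho (n w : ℕ) : LaurentR n →+* LaurentR n :=
  AddMonoidAlgebra.mapDomainRingHom ℤ (keep n w)

lemma rho_single (w : ℕ) (a : Fin n →₀ ℤ) (c : ℤ) :
    rho n w (AddMonoidAlgebra.single a c)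
      = AddMonoidAlgebra.single (a.filter (fun v => w ≤ v.val)) c := by
  classical
  simpa [rho, keep] using AddMonoidAlgebra.mapDomain_single (f := ⇑(keep n w)) (a := a) (r := c)

lemma keep_single_lt (w : ℕ) (v : Fin n) (k : ℤ) (h : v.val < w) :
    (Finsupp.single v k).filter (fun x : Fin n => w ≤ x.val) = 0 := by
  classical
  ext q
  rw [Finsupp.filter_apply]
  by_cases hq : w ≤ q.val
  · simp only [if_pos hq]
    rw [Finsupp.single_apply]
    by_cases hvq : v = q
    · subst hvq; omega
    · simp [hvq]
  · simp [hq]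

lemma keep_single_ge (w : ℕ) (v : Fin n) (k : ℤ) (h : w ≤ v.val) :
    (Finsupp.single v k).filter (fun x : Fin n => w ≤ x.val) = Finsupp.single v k := by
  classical
  ext q
  rw [Finsupp.filter_apply]
  by_cases hq : w ≤ q.val
  · simp [hq]
  · simp only [if_neg hq]
    rw [Finsupp.single_apply]
    by_cases hvq : v = q
    · subst hvq; omega
    · simp [hvq]

lemma rho_Xv_lt (w : ℕ) (v : Fin n) (h : v.val < w) : rho n w (Xv v) = 1 := by
  rw [Xv]
  show rho n w (AddMonoidAlgebra.single (Finsupp.single v 1) 1) = 1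
  rw [rho_single, keep_single_lt w v 1 h]
  rfl

lemma rho_Xv_ge (w : ℕ) (v : Fin n) (h : w ≤ v.val) : rho n w (Xv v) = Xv v := by
  rw [Xv]
  show rho n w (AddMonoidAlgebra.single (Finsupp.single v 1) 1)
    = AddMonoidAlgebra.single (Finsupp.single v 1) 1
  rw [rho_single, keep_single_ge w v 1 h]

lemma rho_sg_lt (w : ℕ) (v : Fin n) (h : v.val < w) : rho n w (sg v) = 0 := by
  rw [sg, map_sub, _root_.map_one, rho_Xv_lt w v h, sub_self]

lemma rho_sg_ge (w : ℕ) (v : Fin n) (h : w ≤ v.val) : rho n w (sg v) = sg v := by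
  rw [sg, map_sub, _root_.map_one, rho_Xv_ge w v h]

lemma rho_muv_ge (w : ℕ) (v : Fin n) (m : ℕ) (h : w ≤ v.val) :
    rho n w (muv v m) = muv v m := by
  rw [muv, map_sum]
  exact Finset.sum_congr rfl fun i _ => by rw [map_pow, rho_Xv_ge w v h]

/-- the ideal generated by `σ_v`, `v < w` -/
def lowI (n w : ℕ) : Ideal (LaurentR n) :=
  ∑ v : Fin n, if v.val < w then Ideal.span {sg v} else 0

lemma single_single_sub_one_mem (v : Fin n) (k : ℤ) :
    (AddMonoidAlgebra.single (Finsupp.single v k) 1 : LaurentR n) - 1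
      ∈ Ideal.span {sg v} := by
  induction k using Int.induction_on with
  | zero =>
    have : (AddMonoidAlgebra.single (Finsupp.single v (0:ℤ)) 1 : LaurentR n) = 1 := by
      rw [Finsupp.single_zero]; rfl
    rw [this, sub_self]
    exact zero_mem _
  | succ j ihj =>
    have key : (AddMonoidAlgebra.single (Finsupp.single v (j+1)) 1 : LaurentR n)
        = AddMonoidAlgebra.single (Finsupp.single v (j:ℤ)) 1 * Xv v := by
      rw [Xv]
      show _ = _ * AddMonoidAlgebra.single (Finsupp.single v 1) 1
      rw [AddMonoidAlgebra.single_mul_single, mul_one, ← Finsupp.single_add]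
    rw [key]
    have : (AddMonoidAlgebra.single (Finsupp.single v (j:ℤ)) 1 : LaurentR n) * Xv v - 1
        = (AddMonoidAlgebra.single (Finsupp.single v (j:ℤ)) 1 - 1) * Xv v + sg v := by
      rw [sg]; ring
    rw [this]
    exact add_mem (Ideal.mul_mem_right _ _ ihj) (Ideal.subset_span rfl)
  | pred j ihj =>
    have key : (AddMonoidAlgebra.single (Finsupp.single v (-j-1)) 1 : LaurentR n)
        = AddMonoidAlgebra.single (Finsupp.single v (-j:ℤ)) 1
            * AddMonoidAlgebra.single (-Finsupp.single v 1) 1 := by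
      rw [AddMonoidAlgebra.single_mul_single, mul_one]
      congr 1
      have h1 : (Finsupp.single v (-(j:ℤ)-1)) = Finsupp.single v (-(j:ℤ)) + (-(Finsupp.single v (1:ℤ))) := by
        rw [← Finsupp.single_neg v (1:ℤ), ← Finsupp.single_add, sub_eq_add_neg]
      exact h1
    have hXinv : (AddMonoidAlgebra.single (-Finsupp.single v 1) 1 : LaurentR n) - 1
        ∈ Ideal.span {sg v} := by
      have hqinv : (AddMonoidAlgebra.single (-Finsupp.single v 1) 1 : LaurentR n)
          = ((Xu v)⁻¹ : (LaurentR n)ˣ) := rfl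
      have : (AddMonoidAlgebra.single (-Finsupp.single v 1) 1 : LaurentR n) - 1
          = -(((Xu v)⁻¹ : (LaurentR n)ˣ) : LaurentR n) * sg v := by
        rw [sg, ← hqinv]
        have hmul : (AddMonoidAlgebra.single (-Finsupp.single v 1) 1 : LaurentR n) * Xv v
            = 1 := by
          rw [Xv]
          show AddMonoidAlgebra.single (-Finsupp.single v 1) (1:ℤ)
              * AddMonoidAlgebra.single (Finsupp.single v 1) 1 = 1
          rw [AddMonoidAlgebra.single_mul_single, mul_one, neg_add_cancel]
          rfl
        rw [hqinv] at hmul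
        rw [hqinv]
        linear_combination hmul
      rw [this]
      exact Ideal.mul_mem_left _ _ (Ideal.subset_span rfl)
    rw [key]
    have : (AddMonoidAlgebra.single (Finsupp.single v (-j:ℤ)) 1 : LaurentR n)
          * AddMonoidAlgebra.single (-Finsupp.single v 1) 1 - 1
        = (AddMonoidAlgebra.single (Finsupp.single v (-j:ℤ)) 1 - 1)
            * AddMonoidAlgebra.single (-Finsupp.single v 1) 1
          + (AddMonoidAlgebra.single (-Finsupp.single v 1) 1 - 1) := by
      ring
    rw [this]
    exact add_mem (Ideal.mul_mem_right _ _ ihj) hXinv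


lemma span_sg_le_lowI (w : ℕ) (v : Fin n) (h : v.val < w) :
    Ideal.span {sg v} ≤ lowI n w := by
  have : Ideal.span {sg v} = (if v.val < w then Ideal.span {sg v} else 0) := by
    rw [if_pos h]
  rw [this, lowI]
  exact Finset.single_le_sum (f := fun q : Fin n => if q.val < w then Ideal.span {sg q} else 0)
    (fun i _ => bot_le) (Finset.mem_univ v)

lemma mono_sub_one_mem (w : ℕ) (a : Fin n →₀ ℤ) (ha : ∀ x ∈ a.support, x.val < w) :
    (AddMonoidAlgebra.single a 1 : LaurentR n) - 1 ∈ lowI n w := by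
  classical
  induction a using Finsupp.induction with
  | zero =>
    have : (AddMonoidAlgebra.single (0 : Fin n →₀ ℤ) 1 : LaurentR n) = 1 := rfl
    rw [this, sub_self]; exact zero_mem _
  | single_add x k f hxf hk ih =>
    have hx : x.val < w := by
      refine ha x ?_
      rw [Finsupp.mem_support_iff, Finsupp.add_apply, Finsupp.single_eq_same,
        Finsupp.notMem_support_iff.mp hxf, add_zero]
      exact hk
    have hsub : ∀ y ∈ f.support, y.val < w := by
      intro y hy
      refine ha y ?_
      rw [Finsupp.mem_support_iff, Finsupp.add_apply]
      intro hcon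
      by_cases hxy : x = y
      · exact hxf (hxy ▸ hy)
      · rw [Finsupp.single_apply, if_neg hxy, zero_add] at hcon
        exact (Finsupp.mem_support_iff.mp hy) hcon
    have key : (AddMonoidAlgebra.single (Finsupp.single x k + f) 1 : LaurentR n)
        = AddMonoidAlgebra.single (Finsupp.single x k) 1 * AddMonoidAlgebra.single f 1 := by
      rw [AddMonoidAlgebra.single_mul_single, mul_one]
    rw [key]
    have expand : (AddMonoidAlgebra.single (Finsupp.single x k) 1 : LaurentR n)
          * AddMonoidAlgebra.single f 1 - 1
        = (AddMonoidAlgebra.single (Finsupp.single x k) 1 - 1) * AddMonoidAlgebra.single f 1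
          + (AddMonoidAlgebra.single f 1 - 1) := by ring
    rw [expand]
    exact add_mem
      (Ideal.mul_mem_right _ _ (span_sg_le_lowI w x hx (single_single_sub_one_mem x k)))
      (ih hsub)

lemma filter_lt_add_keep (w : ℕ) (a : Fin n →₀ ℤ) :
    a.filter (fun v : Fin n => v.val < w) + a.filter (fun v : Fin n => w ≤ v.val) = a := by
  classical
  ext q
  rw [Finsupp.add_apply, Finsupp.filter_apply, Finsupp.filter_apply]
  by_cases hq : q.val < w
  · rw [if_pos hq, if_neg (by omega), add_zero]
  · rw [if_neg hq, if_pos (by omega), zero_add]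

lemma support_filter_lt (w : ℕ) (a : Fin n →₀ ℤ) :
    ∀ x ∈ (a.filter (fun v : Fin n => v.val < w)).support, x.val < w := by
  classical
  intro x hx
  rw [Finsupp.mem_support_iff, Finsupp.filter_apply] at hx
  by_contra hcon
  rw [if_neg hcon] at hx
  exact hx rfl

lemma sub_rho_mem (w : ℕ) (f : LaurentR n) : f - rho n w f ∈ lowI n w := by
  classical
  induction f using AddMonoidAlgebra.induction with
  | zero => rw [map_zero, sub_self]; exact zero_mem _
  | single_add a c g hag hc ih =>
    rw [map_add, add_sub_add_comm]
    refine add_mem ?_ ih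
    rw [rho_single]
    have keysplit : (AddMonoidAlgebra.single a c : LaurentR n)
        = AddMonoidAlgebra.single (a.filter (fun v : Fin n => v.val < w)) 1
          * AddMonoidAlgebra.single (a.filter (fun v : Fin n => w ≤ v.val)) c := by
      rw [AddMonoidAlgebra.single_mul_single, one_mul, filter_lt_add_keep]
    have expand : (AddMonoidAlgebra.single a c : LaurentR n)
          - AddMonoidAlgebra.single (a.filter (fun v : Fin n => w ≤ v.val)) c
        = (AddMonoidAlgebra.single (a.filter (fun v : Fin n => v.val < w)) 1 - 1)
          * AddMonoidAlgebra.single (a.filter (fun v : Fin n => w ≤ v.val)) c := by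
      rw [sub_mul, one_mul, ← keysplit]
    rw [expand]
    exact Ideal.mul_mem_right _ _ (mono_sub_one_mem w _ (support_filter_lt w a))

lemma exists_lowI_decomp (w : ℕ) (x : LaurentR n) (hx : x ∈ lowI n w) :
    ∃ f : Fin n → LaurentR n, (∀ v, ¬ v.val < w → f v = 0) ∧ x = ∑ v, sg v * f v := by
  classical
  obtain ⟨g, hg, hgx⟩ := mem_idealSum Finset.univ _ x hx
  choose aa haa using fun (v : Fin n) (h : v.val < w) =>
    Ideal.mem_span_singleton'.mp (by simpa [if_pos h] using hg v)
  refine ⟨fun v => if h : v.val < w then aa v h else 0, fun v hv => by simp [hv], ?_⟩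
  rw [hgx]
  refine Finset.sum_congr rfl fun v _ => ?_
  by_cases h : v.val < w
  · simp only [dif_pos h]
    rw [mul_comm]
    exact (haa v h).symm
  · simp only [dif_neg h]
    rw [mul_zero]
    have : g v ∈ (0 : Ideal (LaurentR n)) := by simpa [if_neg h] using hg v
    simpa using this

/-! ### Stage 3: the matrix layer -/

variable (u : Fin n)

/-- the matrix supported on row `u` with entries `W`. -/
def rowM (W : Fin n → LaurentR n) : Matrix (Fin n) (Fin n) (LaurentR n) :=
  Matrix.of fun p q => if p = u then W q else 0

lemma rowM_add (W V : Fin n → LaurentR n) : rowM u (W + V) = rowM u W + rowM u V := by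
  ext p q
  by_cases hp : p = u <;> simp [rowM, hp]

lemma rowM_zero : rowM u (0 : Fin n → LaurentR n) = 0 := by
  ext p q
  by_cases hp : p = u <;> simp [rowM, hp]

lemma rowM_mul_rowM (W V : Fin n → LaurentR n) :
    rowM u W * rowM u V = rowM u (W u • V) := by
  ext p q
  rw [Matrix.mul_apply]
  by_cases hp : p = u
  · rw [Finset.sum_eq_single u]
    · simp [rowM, hp]
    · intro k _ hk
      simp [rowM, hk]
    · simp
  · rw [Finset.sum_eq_zero]
    · simp [rowM, hp]
    · intro k _
      simp [rowM, hp]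

lemma one_add_rowM_mul (W V : Fin n → LaurentR n) :
    (1 + rowM u W) * (1 + rowM u V) = 1 + rowM u (W + V + W u • V) := by
  rw [add_mul, mul_add, mul_add]
  simp only [one_mul, mul_one]
  rw [rowM_mul_rowM, rowM_add, rowM_add]
  abel

/-- a row element of `GL_n` : `1 + rowM W`, invertible when `1 + W u` is a unit. -/
def rowU (W : Fin n → LaurentR n) (D : (LaurentR n)ˣ) (hD : (D : LaurentR n) = 1 + W u) :
    GL (Fin n) (LaurentR n) where
  val := 1 + rowM u W
  inv := 1 + rowM u (-((D⁻¹ : (LaurentR n)ˣ) : LaurentR n) • W)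
  val_inv := by
    rw [one_add_rowM_mul]
    have hcoef : W + -((D⁻¹ : (LaurentR n)ˣ) : LaurentR n) • W
        + W u • (-((D⁻¹ : (LaurentR n)ˣ) : LaurentR n) • W) = 0 := by
      funext q
      have hDinv : ((D : LaurentR n)) * ((D⁻¹ : (LaurentR n)ˣ) : LaurentR n) = 1 :=
        Units.mul_inv D
      rw [hD] at hDinv
      simp only [Pi.add_apply, Pi.smul_apply, Pi.neg_apply, Pi.zero_apply, smul_eq_mul]
      linear_combination (-(W q)) * hDinv
    rw [hcoef, rowM_zero, add_zero]
  inv_val := by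
    rw [one_add_rowM_mul]
    have hcoef : -((D⁻¹ : (LaurentR n)ˣ) : LaurentR n) • W + W
        + (-((D⁻¹ : (LaurentR n)ˣ) : LaurentR n) • W) u • W = 0 := by
      funext q
      have hDinv : ((D⁻¹ : (LaurentR n)ˣ) : LaurentR n) * ((D : LaurentR n)) = 1 :=
        Units.inv_mul D
      rw [hD] at hDinv
      simp only [Pi.add_apply, Pi.smul_apply, Pi.neg_apply, Pi.zero_apply, smul_eq_mul]
      linear_combination (-(W q)) * hDinv
    rw [hcoef, rowM_zero, add_zero]

lemma rowU_mem_IAn (W : Fin n → LaurentR n) (D : (LaurentR n)ˣ)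
    (hD : (D : LaurentR n) = 1 + W u) (hS : ∑ q, W q * sg q = 0) :
    rowU u W D hD ∈ IAn n := by
  show ((rowU u W D hD : GL (Fin n) (LaurentR n)) : Matrix (Fin n) (Fin n) (LaurentR n))
      *ᵥ sgVec n = sgVec n
  funext p
  show ((1 + rowM u W : Matrix (Fin n) (Fin n) (LaurentR n)) *ᵥ sgVec n) p = sgVec n p
  rw [Matrix.add_mulVec, Matrix.one_mulVec]
  show sgVec n p + (rowM u W *ᵥ sgVec n) p = sgVec n p
  have : (rowM u W *ᵥ sgVec n) p = 0 := by
    rw [Matrix.mulVec]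
    show ∑ q, rowM u W p q * sgVec n q = 0
    by_cases hp : p = u
    · calc ∑ q, rowM u W p q * sgVec n q = ∑ q, W q * sg q := by
            refine Finset.sum_congr rfl fun q _ => ?_
            simp [rowM, sgVec, hp]
        _ = 0 := hS
    · rw [Finset.sum_eq_zero]
      intro q _
      simp [rowM, hp]
  rw [this, add_zero]

/-- a row element of `IA_n`. -/
def rowIA (W : Fin n → LaurentR n) (D : (LaurentR n)ˣ)
    (hD : (D : LaurentR n) = 1 + W u) (hS : ∑ q, W q * sg q = 0) : IAn n :=
  ⟨rowU u W D hD, rowU_mem_IAn u W D hD hS⟩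

lemma one_add_rowM_pow (W : Fin n → LaurentR n) (k : ℕ) :
    (1 + rowM u W) ^ k = 1 + rowM u ((∑ i ∈ Finset.range k, (1 + W u) ^ i) • W) := by
  induction k with
  | zero => simp [rowM_zero]
  | succ k ih =>
    rw [pow_succ, ih, one_add_rowM_mul]
    have hvec : (∑ i ∈ Finset.range k, (1 + W u) ^ i) • W + W
        + ((∑ i ∈ Finset.range k, (1 + W u) ^ i) • W) u • W
        = (∑ i ∈ Finset.range (k+1), (1 + W u) ^ i) • W := by
      funext q
      simp only [Pi.smul_apply, Pi.add_apply, smul_eq_mul]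
      rw [geom_sum_succ]
      ring
    rw [hvec]

/-! ### Stage 4: generators of `IA_n^m` with row form -/

variable (m : ℕ)

/-- achievability: the row matrix `1 + rowM u c` is realized by an element of `IA_n^m`. -/
def Ach (c : Fin n → LaurentR n) : Prop :=
  ∃ g : IAn n, g ∈ IApow n m ∧ matOf g = 1 + rowM u c

lemma matOf_mul (g h : IAn n) : matOf (g * h) = matOf g * matOf h := rfl

lemma matOf_one : matOf (1 : IAn n) = 1 := rfl

lemma ach_zero : Ach u m 0 := ⟨1, one_mem _, by rw [rowM_zero, add_zero]; rfl⟩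

lemma ach_add {c₁ c₂ : Fin n → LaurentR n} (h1 : Ach u m c₁) (h2 : Ach u m c₂)
    (hu1 : c₁ u = 0) : Ach u m (c₁ + c₂) := by
  obtain ⟨g1, hg1, hm1⟩ := h1
  obtain ⟨g2, hg2, hm2⟩ := h2
  refine ⟨g1 * g2, mul_mem hg1 hg2, ?_⟩
  rw [matOf_mul, hm1, hm2, one_add_rowM_mul, hu1]
  congr 1
  congr 1
  funext q
  simp

lemma matOf_pow (g : IAn n) (k : ℕ) :
    matOf (g ^ k) = ((((g : GL (Fin n) (LaurentR n)) ^ k : GL (Fin n) (LaurentR n)))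
      : Matrix (Fin n) (Fin n) (LaurentR n)) := by
  rw [matOf]
  norm_cast

lemma matOf_rowIA_pow (W : Fin n → LaurentR n) (D : (LaurentR n)ˣ)
    (hD : (D : LaurentR n) = 1 + W u) (hS : ∑ q, W q * sg q = 0) (k : ℕ) :
    matOf ((rowIA u W D hD hS) ^ k)
      = 1 + rowM u ((∑ i ∈ Finset.range k, ((D : LaurentR n)) ^ i) • W) := by
  rw [matOf_pow]
  have : ((rowIA u W D hD hS : GL (Fin n) (LaurentR n)) ^ k : GL (Fin n) (LaurentR n)).val
      = ((rowIA u W D hD hS : GL (Fin n) (LaurentR n)).val) ^ k := Units.val_pow_eq_pow_val _ _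
  rw [this]
  show ((1 + rowM u W) ^ k : Matrix (Fin n) (Fin n) (LaurentR n)) = _
  rw [one_add_rowM_pow]
  congr 2
  funext i
  rw [hD]

lemma ach_m_smul (z : Fin n → LaurentR n) (hzu : z u = 0) (hS : ∑ q, z q * sg q = 0) :
    Ach u m ((m : LaurentR n) • z) := by
  have hD : ((1 : (LaurentR n)ˣ) : LaurentR n) = 1 + z u := by rw [hzu, add_zero]; rfl
  refine ⟨(rowIA u z 1 hD hS) ^ m, Subgroup.subset_closure ⟨_, rfl⟩, ?_⟩
  rw [matOf_rowIA_pow]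
  congr 2
  funext q
  simp only [Units.val_one, one_pow, Finset.sum_const, Finset.card_range, nsmul_eq_mul,
    mul_one, Pi.smul_apply, smul_eq_mul]

/-- the basic diagonal-carrying row element for the monomial `x_a`. -/
def w0 (a : Fin n) : Fin n → LaurentR n :=
  fun q => if q = u then Xv a - 1 else if q = a then -(sg u) else 0

lemma sum_two_ite (a : Fin n) (ha : a ≠ u) (F G : Fin n → LaurentR n) :
    ∑ q, (if q = u then F q else if q = a then G q else 0) = F u + G a := by
  classical
  have : ∀ q, (if q = u then F q else if q = a then G q else 0)
      = (if q = u then F q else 0) + (if q = a then G q else 0) := by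
    intro q
    by_cases hq : q = u
    · rw [if_pos hq, if_pos hq, if_neg (fun h : q = a => ha (h ▸ hq)), add_zero]
    · rw [if_neg hq, if_neg hq, zero_add]
  rw [Finset.sum_congr rfl (fun q _ => this q), Finset.sum_add_distrib]
  rw [Finset.sum_ite_eq' Finset.univ u F, Finset.sum_ite_eq' Finset.univ a G]
  simp

lemma w0_sum (a : Fin n) (ha : a ≠ u) : ∑ q, w0 u a q * sg q = 0 := by
  have : ∀ q, w0 u a q * sg q
      = (if q = u then (Xv a - 1) * sg u else if q = a then -(sg u) * sg a else 0) := by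
    intro q
    rw [w0]
    by_cases hq : q = u
    · rw [if_pos hq, if_pos hq, hq]
    · rw [if_neg hq, if_neg hq]
      by_cases hqa : q = a
      · rw [if_pos hqa, if_pos hqa, hqa]
      · rw [if_neg hqa, if_neg hqa, zero_mul]
  rw [Finset.sum_congr rfl (fun q _ => this q),
    sum_two_ite u a ha (fun _ => (Xv a - 1) * sg u) (fun _ => -(sg u) * sg a)]
  rw [sg, sg]
  ring

lemma w0_u (a : Fin n) : w0 u a u = Xv a - 1 := by rw [w0, if_pos rfl]

lemma ach_muv_smul (a : Fin n) (ha : a ≠ u) (z : Fin n → LaurentR n) (hzu : z u = 0)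
    (hS : ∑ q, z q * sg q = 0) : Ach u m (muv a m • z) := by
  classical
  have hD1 : ((Xu a : (LaurentR n)ˣ) : LaurentR n) = 1 + (w0 u a + z) u := by
    rw [Pi.add_apply, w0_u, hzu, add_zero]
    show Xv a = 1 + (Xv a - 1)
    ring
  have hD0 : ((Xu a : (LaurentR n)ˣ) : LaurentR n) = 1 + w0 u a u := by
    rw [w0_u]
    show Xv a = 1 + (Xv a - 1)
    ring
  have hS1 : ∑ q, (w0 u a + z) q * sg q = 0 := by
    have : ∀ q, (w0 u a + z) q * sg q = w0 u a q * sg q + z q * sg q := by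
      intro q; rw [Pi.add_apply, add_mul]
    rw [Finset.sum_congr rfl (fun q _ => this q), Finset.sum_add_distrib, w0_sum u a ha, hS,
      add_zero]
  set g1 : IAn n := rowIA u (w0 u a + z) (Xu a) hD1 hS1 with hg1def
  set g2 : IAn n := rowIA u (w0 u a) (Xu a) hD0 (w0_sum u a ha) with hg2def
  refine ⟨g1 ^ m * (g2 ^ m)⁻¹, mul_mem (Subgroup.subset_closure ⟨_, rfl⟩)
    (inv_mem (Subgroup.subset_closure ⟨_, rfl⟩)), ?_⟩
  -- compute the matrix of `g1^m * (g2^m)⁻¹`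
  have hXvpow : (Xv a) ^ m = ((Xu a ^ m : (LaurentR n)ˣ) : LaurentR n) := Xv_pow a m
  have hmux : muv a m * (Xv a - 1) = ((Xu a ^ m : (LaurentR n)ˣ) : LaurentR n) - 1 := by
    rw [← hXvpow, ← sg, muv_mul_sg]
  have hD2 : ((Xu a ^ m : (LaurentR n)ˣ) : LaurentR n) = 1 + (muv a m • w0 u a) u := by
    rw [Pi.smul_apply, smul_eq_mul, w0_u]
    linear_combination -hmux
  -- the GL-level identity for `g2^m`
  have hg2m : (g2 : GL (Fin n) (LaurentR n)) ^ m = rowU u (muv a m • w0 u a) (Xu a ^ m) hD2 := by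
    apply Units.ext
    have hval : ((g2 : GL (Fin n) (LaurentR n)) ^ m).val
        = ((g2 : GL (Fin n) (LaurentR n)).val) ^ m := Units.val_pow_eq_pow_val _ _
    rw [hval]
    show ((1 + rowM u (w0 u a)) ^ m : Matrix (Fin n) (Fin n) (LaurentR n)) = 1 + rowM u _
    rw [one_add_rowM_pow]
    have hvec : (∑ i ∈ Finset.range m, (1 + w0 u a u) ^ i) • w0 u a
        = muv a m • w0 u a := by
      have hbase : 1 + w0 u a u = Xv a := by rw [w0_u]; ring
      rw [hbase, muv]
    rw [hvec]
  have hmat1 : matOf (g1 ^ m) = 1 + rowM u (muv a m • (w0 u a + z)) := by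
    rw [hg1def, matOf_rowIA_pow]
    have hsc : (∑ i ∈ Finset.range m, ((Xu a : (LaurentR n)ˣ) : LaurentR n) ^ i)
        = muv a m := by
      rw [muv]
      rfl
    rw [hsc]
  have hmat2 : matOf ((g2 ^ m)⁻¹)
      = 1 + rowM u (-(((Xu a ^ m)⁻¹ : (LaurentR n)ˣ) : LaurentR n) • (muv a m • w0 u a)) := by
    have h1 : ((((g2 ^ m)⁻¹ : IAn n) : GL (Fin n) (LaurentR n)))
        = ((g2 : GL (Fin n) (LaurentR n)) ^ m)⁻¹ := by
      push_cast
      rfl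
    rw [matOf, h1, hg2m]
    rfl
  rw [matOf_mul, hmat1, hmat2, one_add_rowM_mul]
  have hxy : ((Xu a ^ m : (LaurentR n)ˣ) : LaurentR n)
      * (((Xu a ^ m)⁻¹ : (LaurentR n)ˣ) : LaurentR n) = 1 := Units.mul_inv _
  have hvec : muv a m • (w0 u a + z)
      + (-(((Xu a ^ m)⁻¹ : (LaurentR n)ˣ) : LaurentR n)) • (muv a m • w0 u a)
      + (muv a m • (w0 u a + z)) u
        • ((-(((Xu a ^ m)⁻¹ : (LaurentR n)ˣ) : LaurentR n)) • (muv a m • w0 u a))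
      = muv a m • z := by
    funext q
    simp only [Pi.smul_apply, Pi.add_apply, Pi.neg_apply, smul_eq_mul, hzu, add_zero, w0_u]
    linear_combination (-(muv a m * (w0 u a q)
        * (((Xu a ^ m)⁻¹ : (LaurentR n)ˣ) : LaurentR n))) * hmux
      + (-(muv a m * (w0 u a q))) * hxy
  rw [hvec]


/-! ### Stage 5: Koszul pair vectors and closure helpers -/

lemma ach_sum {ι : Type*} (s : Finset ι) (f : ι → (Fin n → LaurentR n))
    (hach : ∀ i ∈ s, Ach u m (f i)) (hu : ∀ i ∈ s, f i u = 0) :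
    Ach u m (∑ i ∈ s, f i) := by
  classical
  induction s using Finset.induction with
  | empty => simpa using ach_zero u m
  | @insert a s ha ih =>
    rw [Finset.sum_insert ha]
    refine ach_add u m (hach a (Finset.mem_insert_self a s)) ?_ (hu a (Finset.mem_insert_self a s))
    exact ih (fun i hi => hach i (Finset.mem_insert_of_mem hi))
      (fun i hi => hu i (Finset.mem_insert_of_mem hi))

lemma sum_apply' {ι : Type*} (s : Finset ι) (f : ι → (Fin n → LaurentR n)) (q : Fin n) :
    (∑ i ∈ s, f i) q = ∑ i ∈ s, f i q := by
  classical
  induction s using Finset.induction with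
  | empty => rfl
  | @insert a s ha ih => rw [Finset.sum_insert ha, Finset.sum_insert ha, Pi.add_apply, ih]

/-- the Koszul pair vector: entries `e·σ_v` at column `W` and `−e·σ_W` at column `v`. -/
def KKvec (v W : Fin n) (e : LaurentR n) : Fin n → LaurentR n :=
  fun q => if q = W then e * sg v else if q = v then -(e * sg W) else 0

lemma KKvec_u {v W : Fin n} (hvu : v ≠ u) (hWu : W ≠ u) (e : LaurentR n) :
    KKvec v W e u = 0 := by
  rw [KKvec, if_neg (fun h : u = W => hWu h.symm), if_neg (fun h : u = v => hvu h.symm)]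

lemma KKvec_sum {v W : Fin n} (hvW : v ≠ W) (e : LaurentR n) :
    ∑ q, KKvec v W e q * sg q = 0 := by
  have : ∀ q, KKvec v W e q * sg q
      = (if q = W then e * sg v * sg W else if q = v then -(e * sg W) * sg v else 0) := by
    intro q
    rw [KKvec]
    by_cases h1 : q = W
    · rw [if_pos h1, if_pos h1, h1]
    · rw [if_neg h1, if_neg h1]
      by_cases h2 : q = v
      · rw [if_pos h2, if_pos h2, h2]
      · rw [if_neg h2, if_neg h2, zero_mul]
  rw [Finset.sum_congr rfl (fun q _ => this q),
    sum_two_ite W v (hvW) (fun _ => e * sg v * sg W) (fun _ => -(e * sg W) * sg v)]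
  ring

lemma KKvec_smul (v W : Fin n) (s e : LaurentR n) :
    s • KKvec v W e = KKvec v W (s * e) := by
  funext q
  rw [Pi.smul_apply, smul_eq_mul, KKvec, KKvec]
  by_cases h1 : q = W
  · rw [if_pos h1, if_pos h1]; ring
  · rw [if_neg h1, if_neg h1]
    by_cases h2 : q = v
    · rw [if_pos h2, if_pos h2]; ring
    · rw [if_neg h2, if_neg h2, mul_zero]

lemma KKvec_add (v W : Fin n) (e₁ e₂ : LaurentR n) :
    KKvec v W (e₁ + e₂) = KKvec v W e₁ + KKvec v W e₂ := by
  funext q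
  rw [Pi.add_apply, KKvec, KKvec, KKvec]
  by_cases h1 : q = W
  · rw [if_pos h1, if_pos h1, if_pos h1]; ring
  · rw [if_neg h1, if_neg h1, if_neg h1]
    by_cases h2 : q = v
    · rw [if_pos h2, if_pos h2, if_pos h2]; ring
    · rw [if_neg h2, if_neg h2, if_neg h2, add_zero]

lemma KKvec_zero (v W : Fin n) : KKvec v W 0 = 0 := by
  funext q
  rw [KKvec]
  by_cases h1 : q = W
  · rw [if_pos h1, zero_mul]; rfl
  · rw [if_neg h1]
    by_cases h2 : q = v
    · rw [if_pos h2, zero_mul, neg_zero]; rfl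
    · rw [if_neg h2]; rfl

lemma ach_KK_m {v W : Fin n} (hvW : v ≠ W) (hvu : v ≠ u) (hWu : W ≠ u) (f : LaurentR n) :
    Ach u m (KKvec v W ((m : LaurentR n) * f)) := by
  have := ach_m_smul u m (KKvec v W f) (KKvec_u u hvu hWu f) (KKvec_sum hvW f)
  rwa [KKvec_smul] at this

lemma ach_KK_mu {v W : Fin n} (a : Fin n) (ha : a ≠ u) (hvW : v ≠ W) (hvu : v ≠ u)
    (hWu : W ≠ u) (f : LaurentR n) :
    Ach u m (KKvec v W (muv a m * f)) := by
  have := ach_muv_smul u m a ha (KKvec v W f) (KKvec_u u hvu hWu f) (KKvec_sum hvW f)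
  rwa [KKvec_smul] at this

/-! ### Stage 6: the core induction -/

/-- the bookkeeping class of the entry in column `v`. -/
def Kcl (v : Fin n) : Ideal (LaurentR n) :=
  (∑ r : Fin n, if r.val < v.val then Ideal.span {sg r * muv r m}
      else if r.val < u.val then Ideal.span {muv r m} else 0)
    + Ideal.span {(m : LaurentR n)}

lemma KKvec_finsum {ι : Type*} (v W : Fin n) (s : Finset ι) (e : ι → LaurentR n) :
    KKvec v W (∑ i ∈ s, e i) = ∑ i ∈ s, KKvec v W (e i) := by
  classical
  induction s using Finset.induction with
  | empty => simpa using KKvec_zero v W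
  | @insert a s ha ih => rw [Finset.sum_insert ha, Finset.sum_insert ha, KKvec_add, ih]

lemma core : ∀ w : ℕ, w ≤ u.val → ∀ b : Fin n → LaurentR n,
    (∀ v : Fin n, w ≤ v.val → b v = 0) →
    (∀ v : Fin n, b v ∈ Kcl u m v) →
    (∑ v, sg v * b v = 0) →
    Ach u m (fun v => sg u * b v) := by
  classical
  intro w
  induction w with
  | zero =>
    intro _ b hsupp _ _
    have hb : ∀ v, b v = 0 := fun v => hsupp v (Nat.zero_le _)
    have h0 : (fun v => sg u * b v) = 0 := by
      funext v; rw [hb v, mul_zero]; rfl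
    rw [h0]
    exact ach_zero u m
  | succ w ih =>
    intro hw b hsupp hcl hsum
    have hwu : w < u.val := hw
    have hwn : w < n := lt_trans hwu u.isLt
    set W : Fin n := ⟨w, hwn⟩ with hWdef
    have hWu : W ≠ u := by
      intro h
      have : W.val = u.val := by rw [h]
      simp only [hWdef] at this
      omega
    -- extract the decomposition of `b W` from its class membership
    have hclW := hcl W
    rw [Kcl, Submodule.add_eq_sup, Submodule.mem_sup] at hclW
    obtain ⟨β₁, hβ₁, β₂, hβ₂, hβsum⟩ := hclW
    obtain ⟨g, hg, hgsum⟩ := mem_idealSum Finset.univ _ β₁ hβ₁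
    obtain ⟨C, hC⟩ := Ideal.mem_span_singleton'.mp hβ₂
    have hA : ∀ r : Fin n, ∃ a : LaurentR n,
        g r = (if r.val < w then a * (sg r * muv r m)
          else if r.val < u.val then a * muv r m else 0) := by
      intro r
      have hgr := hg r
      have hWval : (W : ℕ) = w := rfl
      simp only [hWval] at hgr
      by_cases h1 : r.val < w
      · rw [if_pos h1] at hgr
        obtain ⟨a, ha⟩ := Ideal.mem_span_singleton'.mp hgr
        exact ⟨a, by rw [if_pos h1]; exact ha.symm⟩
      · rw [if_neg h1] at hgr
        by_cases h2 : r.val < u.val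
        · rw [if_pos h2] at hgr
          obtain ⟨a, ha⟩ := Ideal.mem_span_singleton'.mp hgr
          exact ⟨a, by rw [if_neg h1, if_pos h2]; exact ha.symm⟩
        · rw [if_neg h2] at hgr
          refine ⟨0, ?_⟩
          rw [if_neg h1, if_neg h2]
          simpa using hgr
    choose A hAeq using hA
    -- `b W` in expanded form
    have hbW1 : b W = (∑ r : Fin n, if r.val < w then A r * (sg r * muv r m) else 0)
        + (∑ r : Fin n, if w ≤ r.val ∧ r.val < u.val then A r * muv r m else 0)
        + C * (m : LaurentR n) := by
      rw [← hβsum, hgsum, ← hC]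
      congr 1
      rw [Finset.sum_congr rfl (fun r _ => hAeq r), ← Finset.sum_add_distrib]
      refine Finset.sum_congr rfl fun r _ => ?_
      by_cases h1 : r.val < w
      · rw [if_pos h1, if_pos h1, if_neg (by omega), add_zero]
      · rw [if_neg h1, if_neg h1, zero_add]
        by_cases h2 : r.val < u.val
        · rw [if_pos h2, if_pos (by omega)]
        · rw [if_neg h2, if_neg (by omega)]
    -- the retraction kills `b W`
    have hρβ : rho n w (b W) = 0 := by
      have h1 : rho n w (∑ v, sg v * b v) = 0 := by rw [hsum, map_zero]
      rw [map_sum] at h1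
      have h2 : ∀ v ∈ Finset.univ, rho n w (sg v * b v)
          = rho n w (sg v) * rho n w (b v) := fun v _ => map_mul _ _ _
      rw [Finset.sum_congr rfl h2] at h1
      have h3 : ∑ v, rho n w (sg v) * rho n w (b v) = sg W * rho n w (b W) := by
        rw [Finset.sum_eq_single W]
        · rw [rho_sg_ge w W (by simp [hWdef])]
        · intro v _ hvW
          by_cases hv : v.val < w
          · rw [rho_sg_lt w v hv, zero_mul]
          · have hv1 : w + 1 ≤ v.val := by
              have : v.val ≠ w := fun h => hvW (Fin.ext (by simp [hWdef, h]))
              omega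
            rw [hsupp v hv1, map_zero, mul_zero]
        · simp
      rw [h3] at h1
      rcases mul_eq_zero.mp h1 with h | h
      · exact absurd h (sg_ne_zero W)
      · exact h
    -- the vanishing of the retracted pieces
    have hrho0 : (∑ r : Fin n, if w ≤ r.val ∧ r.val < u.val
          then muv r m * rho n w (A r) else 0)
        + (m : LaurentR n) * rho n w C = 0 := by
      have h1 : rho n w (b W) = (∑ r : Fin n, if w ≤ r.val ∧ r.val < u.val
            then muv r m * rho n w (A r) else 0)
          + (m : LaurentR n) * rho n w C := by
        rw [hbW1, map_add, map_add, map_sum, map_sum, _root_.map_mul]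
        have hz : ∀ r ∈ Finset.univ,
            rho n w (if r.val < w then A r * (sg r * muv r m) else 0) = 0 := by
          intro r _
          by_cases h1 : r.val < w
          · rw [if_pos h1, _root_.map_mul, _root_.map_mul, rho_sg_lt w r h1, zero_mul, mul_zero]
          · rw [if_neg h1, map_zero]
        rw [Finset.sum_congr rfl hz, Finset.sum_const_zero, zero_add]
        congr 1
        · refine Finset.sum_congr rfl fun r _ => ?_
          by_cases h1 : w ≤ r.val ∧ r.val < u.val
          · rw [if_pos h1, if_pos h1, _root_.map_mul, rho_muv_ge w r m h1.1, mul_comm]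
          · rw [if_neg h1, if_neg h1, map_zero]
        · rw [map_natCast, mul_comm]
      rw [← h1, hρβ]
    -- decompose the non-retracted parts along the low columns
    choose D hD0 hDeq using fun r : Fin n =>
      exists_lowI_decomp w (A r - rho n w (A r)) (sub_rho_mem w (A r))
    obtain ⟨E, hE0, hEeq⟩ := exists_lowI_decomp w (C - rho n w C) (sub_rho_mem w C)
    -- the column coefficients
    set c : Fin n → LaurentR n := fun v =>
      muv v m * A v
        + (∑ r : Fin n, if w ≤ r.val ∧ r.val < u.val then muv r m * D r v else 0)
        + (m : LaurentR n) * E v with hcdef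
    -- the key equation : `b W = ∑_{v<w} σ_v c_v`
    have hbWc : b W = ∑ v : Fin n, (if v.val < w then sg v * c v else 0) := by
      have hsplit : ∀ v : Fin n, (if v.val < w then sg v * c v else 0)
          = (if v.val < w then A v * (sg v * muv v m) else 0)
            + (∑ r : Fin n, if w ≤ r.val ∧ r.val < u.val
                then muv r m * (sg v * D r v) else 0)
            + (m : LaurentR n) * (sg v * (if v.val < w then E v else 0)) := by
        intro v
        by_cases h1 : v.val < w
        · rw [if_pos h1, if_pos h1, if_pos h1, hcdef]
          simp only []
          rw [mul_add, mul_add, Finset.mul_sum]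
          have : ∀ r : Fin n, sg v * (if w ≤ r.val ∧ r.val < u.val
                then muv r m * D r v else 0)
              = (if w ≤ r.val ∧ r.val < u.val then muv r m * (sg v * D r v) else 0) := by
            intro r
            by_cases h2 : w ≤ r.val ∧ r.val < u.val
            · rw [if_pos h2, if_pos h2]; ring
            · rw [if_neg h2, if_neg h2, mul_zero]
          rw [Finset.sum_congr rfl (fun r _ => this r)]
          ring
        · rw [if_neg h1, if_neg h1, if_neg h1, mul_zero, mul_zero, add_zero]
          have : ∀ r : Fin n, (if w ≤ r.val ∧ r.val < u.val
                then muv r m * (sg v * D r v) else 0) = 0 := by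
            intro r
            by_cases h2 : w ≤ r.val ∧ r.val < u.val
            · rw [if_pos h2, hD0 r v h1, mul_zero, mul_zero]
            · rw [if_neg h2]
          rw [Finset.sum_congr rfl (fun r _ => this r), Finset.sum_const_zero, add_zero]
      rw [Finset.sum_congr rfl (fun v _ => hsplit v), Finset.sum_add_distrib,
        Finset.sum_add_distrib]
      -- middle double sum
      have hmid : (∑ v : Fin n, ∑ r : Fin n, if w ≤ r.val ∧ r.val < u.val
            then muv r m * (sg v * D r v) else 0)
          = (∑ r : Fin n, if w ≤ r.val ∧ r.val < u.val then muv r m * A r else 0)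
            - (∑ r : Fin n, if w ≤ r.val ∧ r.val < u.val
                then muv r m * rho n w (A r) else 0) := by
        rw [Finset.sum_comm, ← Finset.sum_sub_distrib]
        refine Finset.sum_congr rfl fun r _ => ?_
        by_cases h2 : w ≤ r.val ∧ r.val < u.val
        · have hin : ∀ v ∈ Finset.univ, (if w ≤ r.val ∧ r.val < u.val
              then muv r m * (sg v * D r v) else 0) = muv r m * (sg v * D r v) :=
            fun v _ => if_pos h2
          rw [Finset.sum_congr rfl hin, if_pos h2, if_pos h2, ← Finset.mul_sum, ← hDeq r]
          ring
        · have hin : ∀ v ∈ Finset.univ, (if w ≤ r.val ∧ r.val < u.val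
              then muv r m * (sg v * D r v) else 0) = 0 := fun v _ => if_neg h2
          rw [Finset.sum_congr rfl hin, if_neg h2, if_neg h2, Finset.sum_const_zero, sub_zero]
      rw [hmid]
      -- last sum
      have hlast : (∑ v : Fin n, (m : LaurentR n) * (sg v * (if v.val < w then E v else 0)))
          = (m : LaurentR n) * C - (m : LaurentR n) * rho n w C := by
        have h1 : ∀ v : Fin n, (m : LaurentR n) * (sg v * (if v.val < w then E v else 0))
            = (m : LaurentR n) * (sg v * E v) := by
          intro v
          by_cases h2 : v.val < w
          · rw [if_pos h2]
          · rw [if_neg h2, hE0 v h2]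
        rw [Finset.sum_congr rfl (fun v _ => h1 v), ← Finset.mul_sum, ← hEeq]
        ring
      rw [hlast]
      have hgoal : b W - ((∑ r : Fin n, if w ≤ r.val ∧ r.val < u.val
            then muv r m * rho n w (A r) else 0) + (m : LaurentR n) * rho n w C)
          = b W := by rw [hrho0, sub_zero]
      rw [hbW1]
      have hS2 : (∑ r : Fin n, if w ≤ r.val ∧ r.val < u.val then A r * muv r m else 0)
          = (∑ r : Fin n, if w ≤ r.val ∧ r.val < u.val then muv r m * A r else 0) := by
        refine Finset.sum_congr rfl fun r _ => ?_
        by_cases h2 : w ≤ r.val ∧ r.val < u.val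
        · rw [if_pos h2, if_pos h2, mul_comm]
        · rw [if_neg h2, if_neg h2]
      rw [hS2] at *
      linear_combination hrho0
    -- the updated vector
    set b' : Fin n → LaurentR n :=
      fun v => if v.val < w then b v + sg W * c v else 0 with hb'def
    have hsupp' : ∀ v : Fin n, w ≤ v.val → b' v = 0 := by
      intro v hv
      rw [hb'def]
      simp only []
      rw [if_neg (by omega)]
    have hcl' : ∀ v : Fin n, b' v ∈ Kcl u m v := by
      intro v
      rw [hb'def]
      simp only []
      by_cases h1 : v.val < w
      · rw [if_pos h1]
        refine add_mem (hcl v) ?_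
        rw [hcdef]
        simp only []
        rw [mul_add, mul_add]
        rw [Kcl]
        refine add_mem (add_mem ?_ ?_) ?_
        · -- σ_W μ_v A_v
          refine Submodule.mem_sup_left ?_
          have hmem : sg W * (muv v m * A v) ∈ Ideal.span {muv v m} :=
            Ideal.mem_span_singleton'.mpr ⟨sg W * A v, by ring⟩
          have hle : Ideal.span {muv v m}
              ≤ ∑ r : Fin n, if r.val < v.val then Ideal.span {sg r * muv r m}
                  else if r.val < u.val then Ideal.span {muv r m} else 0 := by
            have heq : Ideal.span {muv v m}
                = (if v.val < v.val then Ideal.span {sg v * muv v m}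
                    else if v.val < u.val then Ideal.span {muv v m} else 0) := by
              rw [if_neg (lt_irrefl _), if_pos (by omega)]
            rw [heq]
            exact Finset.single_le_sum
              (f := fun r : Fin n => if r.val < v.val then Ideal.span {sg r * muv r m}
                else if r.val < u.val then Ideal.span {muv r m} else 0)
              (fun i _ => bot_le) (Finset.mem_univ v)
          exact hle hmem
        · -- σ_W ∑_r μ_r D r v
          refine Submodule.mem_sup_left ?_
          rw [Finset.mul_sum]
          refine Submodule.sum_mem _ fun r _ => ?_
          by_cases h2 : w ≤ r.val ∧ r.val < u.val
          · rw [if_pos h2]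
            have hmem : sg W * (muv r m * D r v) ∈ Ideal.span {muv r m} :=
              Ideal.mem_span_singleton'.mpr ⟨sg W * D r v, by ring⟩
            have hle : Ideal.span {muv r m}
                ≤ ∑ r' : Fin n, if r'.val < v.val then Ideal.span {sg r' * muv r' m}
                    else if r'.val < u.val then Ideal.span {muv r' m} else 0 := by
              have heq : Ideal.span {muv r m}
                  = (if r.val < v.val then Ideal.span {sg r * muv r m}
                      else if r.val < u.val then Ideal.span {muv r m} else 0) := by
                rw [if_neg (by omega), if_pos h2.2]
              rw [heq]
              exact Finset.single_le_sum
                (f := fun r' : Fin n => if r'.val < v.val then Ideal.span {sg r' * muv r' m}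
                  else if r'.val < u.val then Ideal.span {muv r' m} else 0)
                (fun i _ => bot_le) (Finset.mem_univ r)
            exact hle hmem
          · rw [if_neg h2, mul_zero]
            exact zero_mem _
        · -- σ_W m E v
          refine Submodule.mem_sup_right ?_
          exact Ideal.mem_span_singleton'.mpr ⟨sg W * E v, by ring⟩
      · rw [if_neg h1]
        exact zero_mem _
    have hsum' : ∑ v, sg v * b' v = 0 := by
      have hfull : ∑ v, sg v * b v
          = (∑ v : Fin n, if v.val < w then sg v * b v else 0) + sg W * b W := by
        have hWterm : sg W * b W = ∑ v : Fin n, (if v = W then sg v * b v else 0) := by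
          rw [Finset.sum_ite_eq' Finset.univ W (fun v => sg v * b v)]
          rw [if_pos (Finset.mem_univ W)]
        rw [hWterm, ← Finset.sum_add_distrib]
        refine Finset.sum_congr rfl fun v _ => ?_
        by_cases h1 : v.val < w
        · rw [if_pos h1, if_neg (fun h : v = W => by rw [h] at h1; simp [hWdef] at h1),
            add_zero]
        · rw [if_neg h1]
          by_cases h2 : v = W
          · rw [if_pos h2, zero_add]
          · rw [if_neg h2, zero_add]
            have hv1 : w + 1 ≤ v.val := by
              have : v.val ≠ w := fun h => h2 (Fin.ext (by simp [hWdef, h]))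
              omega
            rw [hsupp v hv1, mul_zero]
      have hexp : ∑ v, sg v * b' v
          = (∑ v : Fin n, if v.val < w then sg v * b v else 0)
            + sg W * (∑ v : Fin n, if v.val < w then sg v * c v else 0) := by
        rw [Finset.mul_sum, ← Finset.sum_add_distrib]
        refine Finset.sum_congr rfl fun v _ => ?_
        rw [hb'def]
        simp only []
        by_cases h1 : v.val < w
        · rw [if_pos h1, if_pos h1, if_pos h1]
          ring
        · rw [if_neg h1, if_neg h1, if_neg h1, mul_zero, mul_zero, add_zero]
      rw [hexp, ← hbWc]
      rw [hfull] at hsum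
      linear_combination hsum
    -- apply the induction hypothesis
    have hIH := ih (Nat.le_of_succ_le hw) b' hsupp' hcl' hsum'
    -- the difference is a sum of achievable Koszul pieces
    have hdelta : (fun v => sg u * b v)
        = (fun v => sg u * b' v)
          + ∑ v : Fin n, (if v.val < w then KKvec v W (c v * sg u) else 0) := by
      funext q
      rw [Pi.add_apply, sum_apply']
      have happ : ∀ v ∈ Finset.univ, ((if v.val < w then KKvec v W (c v * sg u)
            else (0 : Fin n → LaurentR n)) q)
          = (if v.val < w then KKvec v W (c v * sg u) q else 0) := by
        intro v _
        by_cases h1 : v.val < w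
        · rw [if_pos h1, if_pos h1]
        · rw [if_neg h1, if_neg h1]; rfl
      rw [Finset.sum_congr rfl happ]
      by_cases hq1 : q = W
      · have hKK : ∀ v : Fin n, v.val < w → KKvec v W (c v * sg u) q = c v * sg u * sg v := by
          intro v _
          rw [KKvec, if_pos hq1]
        have hsum2 : ∑ v : Fin n, (if v.val < w then KKvec v W (c v * sg u) q else 0)
            = ∑ v : Fin n, (if v.val < w then sg u * (sg v * c v) else 0) := by
          refine Finset.sum_congr rfl fun v _ => ?_
          by_cases h1 : v.val < w
          · rw [if_pos h1, if_pos h1, hKK v h1]; ring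
          · rw [if_neg h1, if_neg h1]
        have : ∀ x : Fin n, (if x.val < w then sg u * (sg x * c x) else 0)
            = sg u * (if x.val < w then sg x * c x else 0) := by
          intro x
          by_cases h1 : x.val < w
          · rw [if_pos h1, if_pos h1]
          · rw [if_neg h1, if_neg h1, mul_zero]
        rw [hsum2, Finset.sum_congr rfl (fun x _ => this x), ← Finset.mul_sum, ← hbWc]
        have hb'W : b' W = 0 := by
          rw [hb'def]
          simp only []
          rw [if_neg (show ¬ ((W : ℕ) < w) from lt_irrefl w)]
        rw [hq1, hb'W, mul_zero, zero_add]
      · by_cases hq2 : q.val < w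
        · have hsum2 : ∑ v : Fin n, (if v.val < w then KKvec v W (c v * sg u) q else 0)
              = -(c q * sg u * sg W) := by
            rw [Finset.sum_eq_single q]
            · rw [if_pos hq2, KKvec, if_neg hq1, if_pos rfl]
            · intro v _ hvq
              by_cases h1 : v.val < w
              · rw [if_pos h1, KKvec, if_neg hq1, if_neg (fun h : q = v => hvq h.symm)]
              · rw [if_neg h1]
            · simp
          rw [hsum2]
          have hb'q : b' q = b q + sg W * c q := by
            rw [hb'def]
            simp only []
            rw [if_pos hq2]
          rw [hb'q]
          ring
        · have hbq : b q = 0 := by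
            have hv1 : w + 1 ≤ q.val := by
              have : q.val ≠ w := fun h => hq1 (Fin.ext (by simp [hWdef, h]))
              omega
            exact hsupp q hv1
          have hb'q : b' q = 0 := by
            rw [hb'def]
            simp only []
            rw [if_neg hq2]
          have hsum2 : ∑ v : Fin n, (if v.val < w then KKvec v W (c v * sg u) q else 0)
              = 0 := by
            refine Finset.sum_eq_zero fun v _ => ?_
            by_cases h1 : v.val < w
            · rw [if_pos h1, KKvec, if_neg hq1, if_neg (fun h : q = v => by
                rw [h] at hq2; exact hq2 h1)]
            · rw [if_neg h1]
          rw [hsum2, hbq, hb'q, mul_zero, add_zero]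
    rw [hdelta]
    -- assemble achievability
    have hach2 : Ach u m (∑ v : Fin n, (if v.val < w then KKvec v W (c v * sg u) else 0)) := by
      refine ach_sum u m Finset.univ _ (fun v _ => ?_) (fun v _ => ?_)
      · by_cases h1 : v.val < w
        · rw [if_pos h1]
          have hvW : v ≠ W := fun h => by rw [h] at h1; simp [hWdef] at h1
          have hvu : v ≠ u := fun h => by rw [h] at h1; omega
          rw [hcdef]
          simp only []
          rw [add_mul, add_mul, KKvec_add, KKvec_add]
          refine ach_add u m (ach_add u m ?_ ?_ (KKvec_u u hvu hWu _)) ?_ ?_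
          · -- μ_v piece
            have : muv v m * A v * sg u = muv v m * (A v * sg u) := by ring
            rw [this]
            exact ach_KK_mu u m v hvu hvW hvu hWu _
          · -- ∑_r μ_r pieces
            rw [Finset.sum_mul, KKvec_finsum]
            refine ach_sum u m Finset.univ _ (fun r _ => ?_) (fun r _ => ?_)
            · by_cases h2 : w ≤ r.val ∧ r.val < u.val
              · rw [if_pos h2]
                have hru : r ≠ u := fun h => by rw [h] at h2; omega
                have : muv r m * D r v * sg u = muv r m * (D r v * sg u) := by ring
                rw [this]
                exact ach_KK_mu u m r hru hvW hvu hWu _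
              · rw [if_neg h2, zero_mul, KKvec_zero]
                exact ach_zero u m
            · by_cases h2 : w ≤ r.val ∧ r.val < u.val
              · rw [if_pos h2]
                exact KKvec_u u hvu hWu _
              · rw [if_neg h2, zero_mul, KKvec_zero]
                rfl
          · -- m piece
            have : (m : LaurentR n) * E v * sg u = (m : LaurentR n) * (E v * sg u) := by ring
            rw [this]
            exact ach_KK_m u m hvW hvu hWu _
          · -- u entry of the partial sum
            rw [Pi.add_apply, KKvec_u u hvu hWu _, KKvec_u u hvu hWu _, add_zero]
        · rw [if_neg h1]
          exact ach_zero u m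
      · by_cases h1 : v.val < w
        · have hvW : v ≠ W := fun h => by rw [h] at h1; simp [hWdef] at h1
          have hvu : v ≠ u := fun h => by rw [h] at h1; omega
          rw [if_pos h1]
          exact KKvec_u u hvu hWu _
        · rw [if_neg h1]
          rfl
    refine ach_add u m hIH hach2 ?_
    have hb'u : b' u = 0 := hsupp' u (by omega)
    rw [hb'u, mul_zero]

/-! ### Stage 7: initial class membership -/

lemma init_le_Kcl (v : Fin n) :
    ((∑ r : Fin n, if r.val < u.val then augI n * Ideal.span {sg r * muv r m} else 0)
        + augI n * OI n m + Ideal.span {(m : LaurentR n) ^ 2})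
      ≤ Kcl u m v := by
  rw [Kcl]
  have hmain : (∑ r : Fin n, if r.val < u.val then augI n * Ideal.span {sg r * muv r m} else 0)
      ≤ (∑ r : Fin n, if r.val < v.val then Ideal.span {sg r * muv r m}
          else if r.val < u.val then Ideal.span {muv r m} else 0) := by
    refine Finset.sum_le_sum fun r _ => ?_
    by_cases h1 : r.val < u.val
    · rw [if_pos h1]
      by_cases h2 : r.val < v.val
      · rw [if_pos h2]
        exact Ideal.mul_le_right
      · rw [if_neg h2, if_pos h1]
        refine le_trans Ideal.mul_le_right ?_
        exact Ideal.span_singleton_le_span_singleton.mpr (dvd_mul_left _ _)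
    · rw [if_neg h1]
      exact bot_le
  have hm1 : augI n * OI n m ≤ Ideal.span {(m : LaurentR n)} := by
    rw [OI]
    exact Ideal.mul_le_right
  have hm2 : Ideal.span {(m : LaurentR n) ^ 2} ≤ Ideal.span {(m : LaurentR n)} :=
    Ideal.span_singleton_le_span_singleton.mpr (dvd_pow_self _ two_ne_zero)
  calc (∑ r : Fin n, if r.val < u.val then augI n * Ideal.span {sg r * muv r m} else 0)
        + augI n * OI n m + Ideal.span {(m : LaurentR n) ^ 2}
      ≤ (∑ r : Fin n, if r.val < v.val then Ideal.span {sg r * muv r m}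
            else if r.val < u.val then Ideal.span {muv r m} else 0)
          + Ideal.span {(m : LaurentR n)} + Ideal.span {(m : LaurentR n)} := by
        exact add_le_add (add_le_add hmain hm1) hm2
    _ = (∑ r : Fin n, if r.val < v.val then Ideal.span {sg r * muv r m}
            else if r.val < u.val then Ideal.span {muv r m} else 0)
          + Ideal.span {(m : LaurentR n)} := by
        rw [add_assoc, Submodule.add_eq_sup, Submodule.add_eq_sup, Submodule.add_eq_sup,
          sup_idem]

end St18


/-- For `n ≥ 4`, `2 ≤ u ≤ n`, `m ≥ 1`, the `ℤ`-algebra map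
`π_{u−1} : R_n → R_n` fixing `x_r` for `r ≤ u−1` and killing `x_r` for `r ≥ u`, and elements
`b_1,…,b_{u−1}` fixed by `π_{u−1}`, lying in
`Σ_{r=1}^{u−1} 𝔄_nσ_rμ_{r,m}R_n + 𝔄_n·mR_n + m²R_n` and satisfying `Σ_v σ_vb_v = 0`, the
matrix equal to the identity except for the entries `σ_ub_1,…,σ_ub_{u−1}` in columns
`1,…,u−1` of the `u`-th row lies in `IA_n^m`. -/
theorem statement_18 (n m : ℕ) (hn : 4 ≤ n) (hm : 1 ≤ m) (u : Fin n) (hu : 1 ≤ u.val)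
    (π : LaurentR n →+* LaurentR n)
    (hπ1 : ∀ r : Fin n, r.val < u.val → π (Xv r) = Xv r)
    (hπ2 : ∀ r : Fin n, u.val ≤ r.val → π (Xv r) = 1)
    (b : Fin n → LaurentR n)
    (hb0 : ∀ v : Fin n, u.val ≤ v.val → b v = 0)
    (hbπ : ∀ v : Fin n, v.val < u.val → π (b v) = b v)
    (hbI : ∀ v : Fin n, v.val < u.val → b v ∈
      (∑ r : Fin n, if r.val < u.val then augI n * Ideal.span {sg r * muv r m} else 0)
        + augI n * OI n m + Ideal.span {(m : LaurentR n) ^ 2})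
    (hsum : ∑ v : Fin n, sg v * b v = 0) :
    ∃ g : IAn n, g ∈ IApow n m ∧
      matOf g = 1 + Matrix.of (fun p q : Fin n =>
        if p = u ∧ q.val < u.val then sg u * b q else 0) := by

  have hcl : ∀ v : Fin n, b v ∈ St18.Kcl u m v := by
    intro v
    by_cases h1 : v.val < u.val
    · exact St18.init_le_Kcl u m v (hbI v h1)
    · rw [hb0 v (by omega)]
      exact zero_mem _
  obtain ⟨g, hg, hmat⟩ := St18.core u m u.val (le_refl _) b hb0 hcl hsum
  refine ⟨g, hg, ?_⟩
  rw [hmat]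
  congr 1
  ext p q
  rw [St18.rowM, Matrix.of_apply, Matrix.of_apply]
  by_cases hp : p = u
  · rw [if_pos hp]
    by_cases hq : q.val < u.val
    · rw [if_pos ⟨hp, hq⟩]
    · rw [if_neg (fun h => hq h.2), hb0 q (by omega), mul_zero]
  · rw [if_neg hp, if_neg (fun h => hp h.1)]
end
end
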